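/- arXiv:2507.17714 — 5 statements merged into one kernel-verified Lean document; each statement's English description precedes it below -/
import Mathlib

section
/- Assume ζ < 1. Then there exists a strictly increasing bijection λ : [0,t̄] → [0,t̄] such that: (i) Q_φ(s,λ(s)) = 0 for all s ∈ [0,t̄]; (ii) for every s, λ' ∈ [0,t̄], Q_φ(s,λ') = 0 implies λ' = λ(s); (iii) λ(0) = 0 and λ(t̄) = t̄; (iv) for all s, s' ∈ [0,t̄], ((1−ζ)/(1+ζ))·|s−s'| ≤ |λ(s)−λ(s')| ≤ ((1+ζ)/(1−ζ))·|s−s'| (so λ is bi-Lipschitz, with Lip(λ) ≤ (1+ζ)/(1−ζ) and Lip(λ⁻¹) ≤ (1+ζ)/(1−ζ)). -/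
set_option maxHeartbeats 1000000

open Set

noncomputable section

/-- `Q_φ(s,λ) = λ - s + 2(γ₂(λ) - γ₁(s))(φ₂(λ) + φ₁(s))` from the paper. -/
def Qphi (γ₁ γ₂ φ₁ φ₂ : ℝ → ℝ) (s l : ℝ) : ℝ :=
  l - s + 2 * (γ₂ l - γ₁ s) * (φ₂ l + φ₁ s)

/-- existence of the horizontal interpolation reparametrization `λ`. -/
theorem stmt_1 (tb : ℝ) (htb : 0 < tb)
    (γ₁ γ₂ φ₁ φ₂ : ℝ → ℝ) (Mγ Lγ Mφ Lφ : NNReal)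
    (hγ₁lip : LipschitzOnWith Lγ γ₁ (Set.Icc 0 tb))
    (hγ₂lip : LipschitzOnWith Lγ γ₂ (Set.Icc 0 tb))
    (hγ₁bd : ∀ s ∈ Set.Icc 0 tb, |γ₁ s| ≤ (Mγ : ℝ))
    (hγ₂bd : ∀ s ∈ Set.Icc 0 tb, |γ₂ s| ≤ (Mγ : ℝ))
    (hφ₁lip : LipschitzOnWith Lφ φ₁ (Set.Icc 0 tb))
    (hφ₂lip : LipschitzOnWith Lφ φ₂ (Set.Icc 0 tb))
    (hφ₁bd : ∀ s ∈ Set.Icc 0 tb, |φ₁ s| ≤ (Mφ : ℝ))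
    (hφ₂bd : ∀ s ∈ Set.Icc 0 tb, |φ₂ s| ≤ (Mφ : ℝ))
    (hsign : ∀ t ∈ Set.Ioo 0 tb, γ₁ t < 0 ∧ 0 < γ₂ t)
    (hγ₁0 : γ₁ 0 = 0) (hγ₁t : γ₁ tb = 0) (hγ₂0 : γ₂ 0 = 0) (hγ₂t : γ₂ tb = 0)
    (hφ0 : φ₁ 0 = φ₂ 0) (hφt : φ₁ tb = φ₂ tb)
    (zeta : ℝ) (hzdef : zeta = 4 * ((Mγ : ℝ) + (Lγ : ℝ)) * ((Mφ : ℝ) + (Lφ : ℝ)))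
    (hzeta : zeta < 1) :
    ∃ lam : ℝ → ℝ,
      StrictMonoOn lam (Set.Icc 0 tb) ∧
      Set.BijOn lam (Set.Icc 0 tb) (Set.Icc 0 tb) ∧
      (∀ s ∈ Set.Icc 0 tb, Qphi γ₁ γ₂ φ₁ φ₂ s (lam s) = 0) ∧
      (∀ s ∈ Set.Icc 0 tb, ∀ l' ∈ Set.Icc 0 tb,
        Qphi γ₁ γ₂ φ₁ φ₂ s l' = 0 → l' = lam s) ∧
      lam 0 = 0 ∧ lam tb = tb ∧
      (∀ s ∈ Set.Icc 0 tb, ∀ s' ∈ Set.Icc 0 tb,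
        (1 - zeta) / (1 + zeta) * |s - s'| ≤ |lam s - lam s'| ∧
        |lam s - lam s'| ≤ (1 + zeta) / (1 - zeta) * |s - s'|) := by
  classical
  have hMγ : (0:ℝ) ≤ Mγ := Mγ.coe_nonneg
  have hLγ : (0:ℝ) ≤ Lγ := Lγ.coe_nonneg
  have hMφ : (0:ℝ) ≤ Mφ := Mφ.coe_nonneg
  have hLφ : (0:ℝ) ≤ Lφ := Lφ.coe_nonneg
  have hz0 : 0 ≤ zeta := by rw [hzdef]; positivity
  have hz1 : 0 < 1 - zeta := by linarith
  have hz1' : 0 < 1 + zeta := by linarith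
  set I := Set.Icc (0:ℝ) tb with hI
  set g : ℝ → ℝ → ℝ := fun s l => 2 * (γ₂ l - γ₁ s) * (φ₂ l + φ₁ s) with hgdef
  have hQg : ∀ s l, Qphi γ₁ γ₂ φ₁ φ₂ s l = l - s + g s l := fun s l => rfl
  -- key Lipschitz estimate on g
  have hg : ∀ s ∈ I, ∀ s' ∈ I, ∀ l ∈ I, ∀ l' ∈ I,
      |g s l - g s' l'| ≤ zeta * |s - s'| + zeta * |l - l'| := by
    intro s hs s' hs' l hl l' hl'
    have h1 : |γ₁ s - γ₁ s'| ≤ (Lγ:ℝ) * |s - s'| := by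
      have := hγ₁lip.dist_le_mul s hs s' hs'
      simpa [Real.dist_eq] using this
    have h2 : |γ₂ l - γ₂ l'| ≤ (Lγ:ℝ) * |l - l'| := by
      have := hγ₂lip.dist_le_mul l hl l' hl'
      simpa [Real.dist_eq] using this
    have h3 : |φ₁ s - φ₁ s'| ≤ (Lφ:ℝ) * |s - s'| := by
      have := hφ₁lip.dist_le_mul s hs s' hs'
      simpa [Real.dist_eq] using this
    have h4 : |φ₂ l - φ₂ l'| ≤ (Lφ:ℝ) * |l - l'| := by
      have := hφ₂lip.dist_le_mul l hl l' hl'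
      simpa [Real.dist_eq] using this
    have hB : |φ₂ l + φ₁ s| ≤ 2 * (Mφ:ℝ) := by
      have := hφ₂bd l hl; have := hφ₁bd s hs
      calc |φ₂ l + φ₁ s| ≤ |φ₂ l| + |φ₁ s| := abs_add_le _ _
        _ ≤ 2 * (Mφ:ℝ) := by linarith [hφ₂bd l hl, hφ₁bd s hs]
    have hA' : |γ₂ l' - γ₁ s'| ≤ 2 * (Mγ:ℝ) := by
      calc |γ₂ l' - γ₁ s'| ≤ |γ₂ l'| + |γ₁ s'| := abs_sub _ _
        _ ≤ 2 * (Mγ:ℝ) := by linarith [hγ₂bd l' hl', hγ₁bd s' hs']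
    have hAA : |(γ₂ l - γ₁ s) - (γ₂ l' - γ₁ s')| ≤ (Lγ:ℝ) * |l - l'| + (Lγ:ℝ) * |s - s'| := by
      calc |(γ₂ l - γ₁ s) - (γ₂ l' - γ₁ s')| = |(γ₂ l - γ₂ l') - (γ₁ s - γ₁ s')| := by ring_nf
        _ ≤ |γ₂ l - γ₂ l'| + |γ₁ s - γ₁ s'| := abs_sub _ _
        _ ≤ (Lγ:ℝ) * |l - l'| + (Lγ:ℝ) * |s - s'| := add_le_add h2 h1
    have hBB : |(φ₂ l + φ₁ s) - (φ₂ l' + φ₁ s')| ≤ (Lφ:ℝ) * |l - l'| + (Lφ:ℝ) * |s - s'| := by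
      calc |(φ₂ l + φ₁ s) - (φ₂ l' + φ₁ s')| = |(φ₂ l - φ₂ l') + (φ₁ s - φ₁ s')| := by ring_nf
        _ ≤ |φ₂ l - φ₂ l'| + |φ₁ s - φ₁ s'| := abs_add_le _ _
        _ ≤ (Lφ:ℝ) * |l - l'| + (Lφ:ℝ) * |s - s'| := add_le_add h4 h3
    have hdecomp : g s l - g s' l' =
        2 * ((γ₂ l - γ₁ s) - (γ₂ l' - γ₁ s')) * (φ₂ l + φ₁ s)
        + 2 * (γ₂ l' - γ₁ s') * ((φ₂ l + φ₁ s) - (φ₂ l' + φ₁ s')) := by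
      simp only [hgdef]; ring
    have habs1 : |2 * ((γ₂ l - γ₁ s) - (γ₂ l' - γ₁ s')) * (φ₂ l + φ₁ s)|
        ≤ 2 * ((Lγ:ℝ) * |l - l'| + (Lγ:ℝ) * |s - s'|) * (2 * (Mφ:ℝ)) := by
      rw [abs_mul, abs_mul, abs_two]
      have h0 : (0:ℝ) ≤ |(γ₂ l - γ₁ s) - (γ₂ l' - γ₁ s')| := abs_nonneg _
      nlinarith [abs_nonneg (φ₂ l + φ₁ s)]
    have habs2 : |2 * (γ₂ l' - γ₁ s') * ((φ₂ l + φ₁ s) - (φ₂ l' + φ₁ s'))|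
        ≤ 2 * (2 * (Mγ:ℝ)) * ((Lφ:ℝ) * |l - l'| + (Lφ:ℝ) * |s - s'|) := by
      rw [abs_mul, abs_mul, abs_two]
      nlinarith [abs_nonneg ((φ₂ l + φ₁ s) - (φ₂ l' + φ₁ s')), abs_nonneg (γ₂ l' - γ₁ s')]
    have := abs_add_le (2 * ((γ₂ l - γ₁ s) - (γ₂ l' - γ₁ s')) * (φ₂ l + φ₁ s))
      (2 * (γ₂ l' - γ₁ s') * ((φ₂ l + φ₁ s) - (φ₂ l' + φ₁ s')))
    rw [hdecomp]
    have hss : (0:ℝ) ≤ |s - s'| := abs_nonneg _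
    have hll : (0:ℝ) ≤ |l - l'| := abs_nonneg _
    have hzz : 4 * ((Lγ:ℝ) * (Mφ:ℝ) + (Mγ:ℝ) * (Lφ:ℝ)) ≤ zeta := by
      rw [hzdef]; nlinarith [mul_nonneg hMγ hMφ, mul_nonneg hLγ hLφ]
    have hprod : 0 ≤ (zeta - 4 * ((Lγ:ℝ) * (Mφ:ℝ) + (Mγ:ℝ) * (Lφ:ℝ))) * (|s - s'| + |l - l'|) :=
      mul_nonneg (by linarith) (by linarith)
    nlinarith [this, habs1, habs2, hprod]
  have h0I : (0:ℝ) ∈ I := ⟨le_refl 0, le_of_lt htb⟩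
  have htbI : tb ∈ I := ⟨le_of_lt htb, le_refl tb⟩
  have hg00 : g 0 0 = 0 := by simp [hgdef, hγ₂0, hγ₁0]
  have hgtt : g tb tb = 0 := by simp [hgdef, hγ₂t, hγ₁t]
  -- continuity of Q s in l
  have hγ₂c : ContinuousOn γ₂ I := hγ₂lip.continuousOn
  have hφ₂c : ContinuousOn φ₂ I := hφ₂lip.continuousOn
  have hQc : ∀ s, ContinuousOn (fun l => Qphi γ₁ γ₂ φ₁ φ₂ s l) I := by
    intro s
    simp only [Qphi]
    exact ((continuousOn_id.sub continuousOn_const).add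
      ((continuousOn_const.mul (hγ₂c.sub continuousOn_const)).mul
        (hφ₂c.add continuousOn_const)))
  -- existence of root
  have hex : ∀ s ∈ I, ∃ l, l ∈ I ∧ Qphi γ₁ γ₂ φ₁ φ₂ s l = 0 := by
    intro s hs
    have hgs0 : |g s 0| ≤ zeta * s := by
      have := hg s hs 0 h0I 0 h0I 0 h0I
      rw [hg00] at this
      simpa [abs_of_nonneg hs.1] using this
    have hgst : |g s tb| ≤ zeta * (tb - s) := by
      have := hg s hs tb htbI tb htbI tb htbI
      rw [hgtt] at this
      have h1 : |s - tb| = tb - s := by rw [abs_sub_comm, abs_of_nonneg (by linarith [hs.2])]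
      have h2 : |tb - tb| = 0 := by simp
      rw [sub_zero, h1, h2] at this
      linarith
    have hQ0 : Qphi γ₁ γ₂ φ₁ φ₂ s 0 ≤ 0 := by
      rw [hQg]
      have := abs_le.1 hgs0
      nlinarith [hs.1]
    have hQt : 0 ≤ Qphi γ₁ γ₂ φ₁ φ₂ s tb := by
      rw [hQg]
      have := abs_le.1 hgst
      nlinarith [hs.2]
    have hsub := intermediate_value_Icc (le_of_lt htb) (hQc s)
    have hmem : (0:ℝ) ∈ Set.Icc (Qphi γ₁ γ₂ φ₁ φ₂ s 0) (Qphi γ₁ γ₂ φ₁ φ₂ s tb) := ⟨hQ0, hQt⟩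
    obtain ⟨l, hlI, hl⟩ := hsub hmem
    exact ⟨l, hlI, hl⟩
  -- define lam
  set lam : ℝ → ℝ := fun s => if hs : s ∈ I then (hex s hs).choose else s with hlamdef
  have hlamI : ∀ s ∈ I, lam s ∈ I := by
    intro s hs
    simp only [hlamdef, dif_pos hs]
    exact (hex s hs).choose_spec.1
  have hlamQ : ∀ s ∈ I, Qphi γ₁ γ₂ φ₁ φ₂ s (lam s) = 0 := by
    intro s hs
    simp only [hlamdef, dif_pos hs]
    exact (hex s hs).choose_spec.2
  -- uniqueness of roots
  have huniq : ∀ s ∈ I, ∀ l ∈ I, ∀ l' ∈ I,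
      Qphi γ₁ γ₂ φ₁ φ₂ s l = 0 → Qphi γ₁ γ₂ φ₁ φ₂ s l' = 0 → l = l' := by
    intro s hs l hl l' hl' h1 h2
    rw [hQg] at h1 h2
    have hdiff : l - l' = -(g s l - g s l') := by linarith
    have hb := hg s hs s hs l hl l' hl'
    rw [sub_self, abs_zero, mul_zero, zero_add] at hb
    have heq : |l - l'| = |g s l - g s l'| := by rw [hdiff, abs_neg]
    have : |l - l'| ≤ zeta * |l - l'| := heq ▸ hb
    have h3 : (1 - zeta) * |l - l'| ≤ 0 := by linarith
    have h4 : |l - l'| ≤ 0 := by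
      by_contra h
      push_neg at h
      nlinarith
    have := abs_nonneg (l - l')
    have : |l - l'| = 0 := le_antisymm h4 this
    have := abs_eq_zero.1 this
    linarith
  have hlamuniq : ∀ s ∈ I, ∀ l' ∈ I, Qphi γ₁ γ₂ φ₁ φ₂ s l' = 0 → l' = lam s := by
    intro s hs l' hl' h
    exact (huniq s hs (lam s) (hlamI s hs) l' hl' (hlamQ s hs) h).symm
  -- lam 0 = 0, lam tb = tb
  have hQ00 : Qphi γ₁ γ₂ φ₁ φ₂ 0 0 = 0 := by simp [Qphi, hγ₂0, hγ₁0]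
  have hQtt : Qphi γ₁ γ₂ φ₁ φ₂ tb tb = 0 := by simp [Qphi, hγ₂t, hγ₁t]
  have hlam0 : lam 0 = 0 := (hlamuniq 0 h0I 0 h0I hQ00).symm
  have hlamt : lam tb = tb := (hlamuniq tb htbI tb htbI hQtt).symm
  -- key relation
  have hrel : ∀ s ∈ I, ∀ s' ∈ I,
      |(lam s - lam s') - (s - s')| ≤ zeta * |s - s'| + zeta * |lam s - lam s'| := by
    intro s hs s' hs'
    have h1 := hlamQ s hs
    have h2 := hlamQ s' hs'
    rw [hQg] at h1 h2
    have hdiff : (lam s - lam s') - (s - s') = -(g s (lam s) - g s' (lam s')) := by linarith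
    rw [hdiff, abs_neg]
    exact hg s hs s' hs' (lam s) (hlamI s hs) (lam s') (hlamI s' hs')
  -- biLipschitz bounds
  have hbil : ∀ s ∈ I, ∀ s' ∈ I,
      (1 - zeta) / (1 + zeta) * |s - s'| ≤ |lam s - lam s'| ∧
      |lam s - lam s'| ≤ (1 + zeta) / (1 - zeta) * |s - s'| := by
    intro s hs s' hs'
    have hr := hrel s hs s' hs'
    set a := lam s - lam s' with ha
    set b := s - s' with hb
    have t1 : |b| - |a| ≤ |a - b| := by
      have := abs_sub_abs_le_abs_sub b a
      rwa [abs_sub_comm b a] at this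
    have t2 : |a| - |b| ≤ |a - b| := abs_sub_abs_le_abs_sub a b
    constructor
    · rw [div_mul_eq_mul_div, div_le_iff₀ hz1']
      nlinarith [abs_nonneg a, abs_nonneg b]
    · rw [div_mul_eq_mul_div, le_div_iff₀ hz1]
      nlinarith [abs_nonneg a, abs_nonneg b]
  -- strict monotone
  have hmono : StrictMonoOn lam I := by
    intro s hs s' hs' hss'
    have hr := hrel s hs s' hs'
    by_contra h
    push_neg at h
    have ha : 0 ≤ lam s - lam s' := by linarith
    have hb : s - s' < 0 := by linarith
    have h1 : |(lam s - lam s') - (s - s')| = (lam s - lam s') - (s - s') := by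
      rw [abs_of_nonneg]; linarith
    have h2 : |lam s - lam s'| = lam s - lam s' := abs_of_nonneg ha
    have h3 : |s - s'| = -(s - s') := abs_of_neg hb
    rw [h1, h2, h3] at hr
    nlinarith
  -- lipschitz continuity of lam
  have hlamc : ContinuousOn lam I := by
    apply LipschitzOnWith.continuousOn (K := Real.toNNReal ((1 + zeta) / (1 - zeta)))
    apply LipschitzOnWith.of_dist_le_mul
    intro x hx y hy
    have := (hbil x hx y hy).2
    rw [Real.dist_eq, Real.dist_eq]
    rwa [Real.coe_toNNReal _ (le_of_lt (div_pos hz1' hz1))]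
  -- bijOn
  have hsurj : Set.SurjOn lam I I := by
    intro y hy
    have hsub := intermediate_value_Icc (le_of_lt htb) hlamc
    rw [hlam0, hlamt] at hsub
    exact hsub hy
  have hbij : Set.BijOn lam I I := ⟨hlamI, hmono.injOn, hsurj⟩
  exact ⟨lam, hmono, hbij, hlamQ, hlamuniq, hlam0, hlamt, hbil⟩
end
end

section
/- Assume ζ < 1. Then the map ρ : [0,1]×[0,t̄] → ℝ³, ρ(h,s) = (1−h)·p₁(s) + h·p₂(λ(s)), is Lipschitz continuous and satisfies: (a) ρ(∂Q) = p₁([0,t̄]) ∪ p₂([0,t̄]), where Q = (0,1)×I; (b) ρ(h,s) = (1−h)·ρ(0,s) + h·ρ(1,s) for all (h,s); (c) for every (h,s) ∈ Q, ∂ρ/∂h (h,s) = ρ(1,s) − ρ(0,s) = p₂(λ(s)) − p₁(s) lies in the horizontal plane H_{ρ(h,s)}, i.e. its third component equals 2ρ₂(h,s) times its first component minus 2ρ₁(h,s) times its second component. In particular the parametric surface R_φ = ρ(Q) is foliated by straight horizontal segments spanned by the intrinsic graph of φ. -/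
open Set
set_option maxHeartbeats 1000000

noncomputable section

/-- The boundary curve `p(s) = (φ(s), γ(s), s + 2γ(s)φ(s))` in `ℝ³ ≅ ℍ`. -/
def heisP (γ φ : ℝ → ℝ) (s : ℝ) : ℝ × ℝ × ℝ :=
  (φ s, γ s, s + 2 * γ s * φ s)

/-- The ruled parametrization `ρ(h,s) = (1-h)·p₁(s) + h·p₂(λ(s))`. -/
def heisRho (γ₁ γ₂ φ₁ φ₂ lam : ℝ → ℝ) (w : ℝ × ℝ) : ℝ × ℝ × ℝ :=
  (1 - w.1) • heisP γ₁ φ₁ w.2 + w.1 • heisP γ₂ φ₂ (lam w.2)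

private lemma affine_diff_bound {h h' a a' b b' C d D e : ℝ}
    (hh0 : 0 ≤ h) (hh1 : h ≤ 1)
    (ha : |a - a'| ≤ C * d) (hb : |b - b'| ≤ C * d)
    (ha' : |a'| ≤ D) (hb' : |b'| ≤ D) (he : |h - h'| ≤ e) :
    |((1 - h) * a + h * b) - ((1 - h') * a' + h' * b')| ≤ 2 * (C * d) + 2 * (D * e) := by
  have hrw : ((1 - h) * a + h * b) - ((1 - h') * a' + h' * b')
      = (1 - h) * (a - a') + h * (b - b') + ((h' - h) * a' + (h - h') * b') := by ring
  rw [hrw]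
  have h1 : |(1 - h) * (a - a')| ≤ 1 * (C * d) := by
    rw [abs_mul]
    exact mul_le_mul (abs_le.mpr ⟨by linarith, by linarith⟩) ha (abs_nonneg _) zero_le_one
  have h2 : |h * (b - b')| ≤ 1 * (C * d) := by
    rw [abs_mul]
    exact mul_le_mul (abs_le.mpr ⟨by linarith, by linarith⟩) hb (abs_nonneg _) zero_le_one
  have h3 : |(h' - h) * a' + (h - h') * b'| ≤ e * D + e * D := by
    calc |(h' - h) * a' + (h - h') * b'| ≤ |(h' - h) * a'| + |(h - h') * b'| := abs_add_le _ _
      _ = |h - h'| * |a'| + |h - h'| * |b'| := by rw [abs_mul, abs_mul, abs_sub_comm h' h]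
      _ ≤ e * D + e * D :=
        add_le_add (mul_le_mul he ha' (abs_nonneg _) ((abs_nonneg _).trans he))
          (mul_le_mul he hb' (abs_nonneg _) ((abs_nonneg _).trans he))
  calc |(1 - h) * (a - a') + h * (b - b') + ((h' - h) * a' + (h - h') * b')|
      ≤ |(1 - h) * (a - a')| + |h * (b - b')| + |(h' - h) * a' + (h - h') * b'| :=
        abs_add_three _ _ _
    _ ≤ 2 * (C * d) + 2 * (D * e) := by linarith

private lemma heisP3_lip {tb Lγ Mγ Lφ Mφ : ℝ} {γ φ : ℝ → ℝ}
    (hγlip : ∀ s ∈ Icc 0 tb, ∀ s' ∈ Icc 0 tb, |γ s - γ s'| ≤ Lγ * |s - s'|)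
    (hφlip : ∀ s ∈ Icc 0 tb, ∀ s' ∈ Icc 0 tb, |φ s - φ s'| ≤ Lφ * |s - s'|)
    (hγbd : ∀ s ∈ Icc 0 tb, |γ s| ≤ Mγ)
    (hφbd : ∀ s ∈ Icc 0 tb, |φ s| ≤ Mφ)
    {s s' : ℝ} (hs : s ∈ Icc 0 tb) (hs' : s' ∈ Icc 0 tb) :
    |(s + 2 * γ s * φ s) - (s' + 2 * γ s' * φ s')|
      ≤ (1 + 2 * (Lγ * Mφ + Mγ * Lφ)) * |s - s'| := by
  have hp : |γ s * φ s - γ s' * φ s'| ≤ (Lγ * |s - s'|) * Mφ + Mγ * (Lφ * |s - s'|) := by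
    have hrw : γ s * φ s - γ s' * φ s' = (γ s - γ s') * φ s + γ s' * (φ s - φ s') := by ring
    rw [hrw]
    calc |(γ s - γ s') * φ s + γ s' * (φ s - φ s')|
        ≤ |(γ s - γ s') * φ s| + |γ s' * (φ s - φ s')| := abs_add_le _ _
      _ = |γ s - γ s'| * |φ s| + |γ s'| * |φ s - φ s'| := by rw [abs_mul, abs_mul]
      _ ≤ (Lγ * |s - s'|) * Mφ + Mγ * (Lφ * |s - s'|) :=
        add_le_add
          (mul_le_mul (hγlip s hs s' hs') (hφbd s hs) (abs_nonneg _)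
            ((abs_nonneg _).trans (hγlip s hs s' hs')))
          (mul_le_mul (hγbd s' hs') (hφlip s hs s' hs') (abs_nonneg _)
            ((abs_nonneg _).trans (hγbd s' hs')))
  have htri : |(s + 2 * γ s * φ s) - (s' + 2 * γ s' * φ s')|
      ≤ |s - s'| + 2 * |γ s * φ s - γ s' * φ s'| := by
    have hrw : (s + 2 * γ s * φ s) - (s' + 2 * γ s' * φ s')
        = (s - s') + 2 * (γ s * φ s - γ s' * φ s') := by ring
    rw [hrw]
    calc |(s - s') + 2 * (γ s * φ s - γ s' * φ s')|
        ≤ |s - s'| + |2 * (γ s * φ s - γ s' * φ s')| := abs_add_le _ _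
      _ = |s - s'| + 2 * |γ s * φ s - γ s' * φ s'| := by
          rw [abs_mul]; norm_num
  nlinarith [htri, hp, abs_nonneg (s - s')]

private lemma lam_lip_aux {tb Lγ Mγ Lφ Mφ zeta : ℝ} {γ₁ γ₂ φ₁ φ₂ lam : ℝ → ℝ}
    (hMγ : 0 ≤ Mγ) (hLγ : 0 ≤ Lγ) (hMφ : 0 ≤ Mφ) (hLφ : 0 ≤ Lφ)
    (hzdef : zeta = 4 * (Mγ + Lγ) * (Mφ + Lφ)) (hz1 : zeta < 1)
    (hγ₁lip : ∀ s ∈ Icc 0 tb, ∀ s' ∈ Icc 0 tb, |γ₁ s - γ₁ s'| ≤ Lγ * |s - s'|)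
    (hγ₂lip : ∀ s ∈ Icc 0 tb, ∀ s' ∈ Icc 0 tb, |γ₂ s - γ₂ s'| ≤ Lγ * |s - s'|)
    (hφ₁lip : ∀ s ∈ Icc 0 tb, ∀ s' ∈ Icc 0 tb, |φ₁ s - φ₁ s'| ≤ Lφ * |s - s'|)
    (hφ₂lip : ∀ s ∈ Icc 0 tb, ∀ s' ∈ Icc 0 tb, |φ₂ s - φ₂ s'| ≤ Lφ * |s - s'|)
    (hγ₁bd : ∀ s ∈ Icc 0 tb, |γ₁ s| ≤ Mγ) (hγ₂bd : ∀ s ∈ Icc 0 tb, |γ₂ s| ≤ Mγ)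
    (hφ₁bd : ∀ s ∈ Icc 0 tb, |φ₁ s| ≤ Mφ) (hφ₂bd : ∀ s ∈ Icc 0 tb, |φ₂ s| ≤ Mφ)
    (hmaps : MapsTo lam (Icc 0 tb) (Icc 0 tb))
    (hsol : ∀ s ∈ Icc 0 tb,
      lam s - s + 2 * (γ₂ (lam s) - γ₁ s) * (φ₂ (lam s) + φ₁ s) = 0)
    {s s' : ℝ} (hs : s ∈ Icc 0 tb) (hs' : s' ∈ Icc 0 tb) :
    |lam s - lam s'| ≤ (1 + zeta) / (1 - zeta) * |s - s'| := by
  have hu : lam s ∈ Icc 0 tb := hmaps hs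
  have hu' : lam s' ∈ Icc 0 tb := hmaps hs'
  set u := lam s with hudef
  set u' := lam s' with hu'def
  set Du := |u - u'| with hDudef
  set d := |s - s'| with hddef
  have hQ := hsol s hs
  have hQ' := hsol s' hs'
  have hAd : |(γ₂ u - γ₁ s) - (γ₂ u' - γ₁ s')| ≤ Lγ * Du + Lγ * d := by
    have hrw : (γ₂ u - γ₁ s) - (γ₂ u' - γ₁ s') = (γ₂ u - γ₂ u') + (γ₁ s' - γ₁ s) := by ring
    rw [hrw]
    calc |(γ₂ u - γ₂ u') + (γ₁ s' - γ₁ s)| ≤ |γ₂ u - γ₂ u'| + |γ₁ s' - γ₁ s| := abs_add_le _ _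
      _ ≤ Lγ * Du + Lγ * d := by
          have h1 := hγ₂lip u hu u' hu'
          have h2 := hγ₁lip s' hs' s hs
          rw [abs_sub_comm s' s] at h2
          exact add_le_add h1 h2
  have hBd : |(φ₂ u + φ₁ s) - (φ₂ u' + φ₁ s')| ≤ Lφ * Du + Lφ * d := by
    have hrw : (φ₂ u + φ₁ s) - (φ₂ u' + φ₁ s') = (φ₂ u - φ₂ u') + (φ₁ s - φ₁ s') := by ring
    rw [hrw]
    calc |(φ₂ u - φ₂ u') + (φ₁ s - φ₁ s')| ≤ |φ₂ u - φ₂ u'| + |φ₁ s - φ₁ s'| := abs_add_le _ _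
      _ ≤ Lφ * Du + Lφ * d := add_le_add (hφ₂lip u hu u' hu') (hφ₁lip s hs s' hs')
  have hB : |φ₂ u + φ₁ s| ≤ 2 * Mφ := by
    calc |φ₂ u + φ₁ s| ≤ |φ₂ u| + |φ₁ s| := abs_add_le _ _
      _ ≤ 2 * Mφ := by have := hφ₂bd u hu; have := hφ₁bd s hs; linarith
  have hA' : |γ₂ u' - γ₁ s'| ≤ 2 * Mγ := by
    calc |γ₂ u' - γ₁ s'| ≤ |γ₂ u'| + |γ₁ s'| := abs_sub _ _
      _ ≤ 2 * Mγ := by have := hγ₂bd u' hu'; have := hγ₁bd s' hs'; linarith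
  have hprod : |(γ₂ u - γ₁ s) * (φ₂ u + φ₁ s) - (γ₂ u' - γ₁ s') * (φ₂ u' + φ₁ s')|
      ≤ (Lγ * Du + Lγ * d) * (2 * Mφ) + (2 * Mγ) * (Lφ * Du + Lφ * d) := by
    have hrw : (γ₂ u - γ₁ s) * (φ₂ u + φ₁ s) - (γ₂ u' - γ₁ s') * (φ₂ u' + φ₁ s')
        = ((γ₂ u - γ₁ s) - (γ₂ u' - γ₁ s')) * (φ₂ u + φ₁ s)
          + (γ₂ u' - γ₁ s') * ((φ₂ u + φ₁ s) - (φ₂ u' + φ₁ s')) := by ring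
    rw [hrw]
    calc _ ≤ |((γ₂ u - γ₁ s) - (γ₂ u' - γ₁ s')) * (φ₂ u + φ₁ s)|
            + |(γ₂ u' - γ₁ s') * ((φ₂ u + φ₁ s) - (φ₂ u' + φ₁ s'))| := abs_add_le _ _
      _ = |(γ₂ u - γ₁ s) - (γ₂ u' - γ₁ s')| * |φ₂ u + φ₁ s|
            + |γ₂ u' - γ₁ s'| * |(φ₂ u + φ₁ s) - (φ₂ u' + φ₁ s')| := by rw [abs_mul, abs_mul]
      _ ≤ (Lγ * Du + Lγ * d) * (2 * Mφ) + (2 * Mγ) * (Lφ * Du + Lφ * d) :=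
        add_le_add (mul_le_mul hAd hB (abs_nonneg _) ((abs_nonneg _).trans hAd))
          (mul_le_mul hA' hBd (abs_nonneg _) ((abs_nonneg _).trans hA'))
  have hmain : Du ≤ d + (4 * (Lγ * Mφ + Mγ * Lφ)) * (Du + d) := by
    have hrw : u - u' = (s - s')
        - 2 * ((γ₂ u - γ₁ s) * (φ₂ u + φ₁ s) - (γ₂ u' - γ₁ s') * (φ₂ u' + φ₁ s')) := by
      linarith [hQ, hQ']
    have hDle : Du ≤ d + 2 * |(γ₂ u - γ₁ s) * (φ₂ u + φ₁ s)
        - (γ₂ u' - γ₁ s') * (φ₂ u' + φ₁ s')| := by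
      rw [hDudef, hrw]
      calc |(s - s') - 2 * ((γ₂ u - γ₁ s) * (φ₂ u + φ₁ s) - (γ₂ u' - γ₁ s') * (φ₂ u' + φ₁ s'))|
          ≤ |s - s'| + |2 * ((γ₂ u - γ₁ s) * (φ₂ u + φ₁ s)
              - (γ₂ u' - γ₁ s') * (φ₂ u' + φ₁ s'))| := abs_sub _ _
        _ = d + 2 * |(γ₂ u - γ₁ s) * (φ₂ u + φ₁ s)
              - (γ₂ u' - γ₁ s') * (φ₂ u' + φ₁ s')| := by rw [abs_mul]; norm_num; rfl
    nlinarith [hprod]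
  have hc_le : 4 * (Lγ * Mφ + Mγ * Lφ) ≤ zeta := by
    nlinarith [mul_nonneg hMγ hMφ, mul_nonneg hLγ hLφ]
  have hc0 : 0 ≤ 4 * (Lγ * Mφ + Mγ * Lφ) := by positivity
  have h1z : 0 < 1 - zeta := by linarith
  rw [div_mul_eq_mul_div, le_div_iff₀ h1z]
  have hDu0 : 0 ≤ Du := abs_nonneg _
  have hd0 : 0 ≤ d := abs_nonneg _
  nlinarith [mul_nonneg (sub_nonneg.mpr hc_le) hDu0, mul_nonneg (sub_nonneg.mpr hc_le) hd0]

private lemma trans_le_Cd {v L CP Kl d : ℝ} (h : v ≤ L * d) (hLCP : L ≤ CP)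
    (hKl0 : 0 ≤ Kl) (hCP0 : 0 ≤ CP) (hd0 : 0 ≤ d) : v ≤ CP * (1 + Kl) * d := by
  nlinarith [mul_nonneg (sub_nonneg.mpr hLCP) hd0, mul_nonneg hCP0 (mul_nonneg hKl0 hd0)]

private lemma trans_le_Cd' {v Du L CP Kl d : ℝ} (h : v ≤ L * Du) (hDu : Du ≤ Kl * d)
    (hDu0 : 0 ≤ Du) (hL0 : 0 ≤ L) (hLCP : L ≤ CP) (hKl0 : 0 ≤ Kl) (hCP0 : 0 ≤ CP)
    (hd0 : 0 ≤ d) : v ≤ CP * (1 + Kl) * d := by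
  nlinarith [mul_nonneg (sub_nonneg.mpr hLCP) hDu0, mul_nonneg hCP0 (sub_nonneg.mpr hDu),
    mul_nonneg hCP0 hd0]

private lemma rho_comp_bound {h h' a a' b b' C d BP m : ℝ}
    (hh0 : 0 ≤ h) (hh1 : h ≤ 1) (ha : |a - a'| ≤ C * d) (hb : |b - b'| ≤ C * d)
    (ha' : |a'| ≤ BP) (hb' : |b'| ≤ BP) (hC0 : 0 ≤ C) (hBP0 : 0 ≤ BP)
    (hdm : d ≤ m) (hem : |h - h'| ≤ m) :
    |((1 - h) * a + h * b) - ((1 - h') * a' + h' * b')| ≤ (2 * C + 2 * BP) * m := by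
  have key := affine_diff_bound hh0 hh1 ha hb ha' hb' (le_refl |h - h'|)
  nlinarith [mul_nonneg hC0 (sub_nonneg.mpr hdm), mul_nonneg hBP0 (sub_nonneg.mpr hem)]

private lemma third_bound {x g f Mγ Mφ tb BP : ℝ} (hx0 : 0 ≤ x) (hxtb : x ≤ tb)
    (hg : |g| ≤ Mγ) (hf : |f| ≤ Mφ) (hMγ : 0 ≤ Mγ)
    (hBP : BP = Mφ + Mγ + (tb + 2 * Mγ * Mφ)) :
    |x + 2 * g * f| ≤ BP := by
  have h1 : |x| ≤ tb := abs_le.mpr ⟨by linarith, hxtb⟩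
  have h2 : |g * f| ≤ Mγ * Mφ := by
    rw [abs_mul]; exact mul_le_mul hg hf (abs_nonneg _) hMγ
  have h3 : |x + 2 * g * f| ≤ |x| + 2 * |g * f| := by
    calc |x + 2 * g * f| ≤ |x| + |2 * g * f| := abs_add_le _ _
      _ = |x| + 2 * |g * f| := by rw [mul_assoc, abs_mul]; norm_num
  have hMφ : 0 ≤ Mφ := (abs_nonneg _).trans hf
  nlinarith

/-- the ruled parametrization `ρ` is Lipschitz, sends `∂Q` onto the
intrinsic graph of `φ`, is affine in `h`, and its `h`-derivative is a horizontal
vector at every point of the segment. -/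
theorem stmt_4 (tb : ℝ) (htb : 0 < tb)
    (γ₁ γ₂ φ₁ φ₂ : ℝ → ℝ) (Mγ Lγ Mφ Lφ : NNReal)
    (hγ₁lip : LipschitzOnWith Lγ γ₁ (Set.Icc 0 tb))
    (hγ₂lip : LipschitzOnWith Lγ γ₂ (Set.Icc 0 tb))
    (hγ₁bd : ∀ s ∈ Set.Icc 0 tb, |γ₁ s| ≤ (Mγ : ℝ))
    (hγ₂bd : ∀ s ∈ Set.Icc 0 tb, |γ₂ s| ≤ (Mγ : ℝ))
    (hφ₁lip : LipschitzOnWith Lφ φ₁ (Set.Icc 0 tb))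
    (hφ₂lip : LipschitzOnWith Lφ φ₂ (Set.Icc 0 tb))
    (hφ₁bd : ∀ s ∈ Set.Icc 0 tb, |φ₁ s| ≤ (Mφ : ℝ))
    (hφ₂bd : ∀ s ∈ Set.Icc 0 tb, |φ₂ s| ≤ (Mφ : ℝ))
    (hsign : ∀ t ∈ Set.Ioo 0 tb, γ₁ t < 0 ∧ 0 < γ₂ t)
    (hγ₁0 : γ₁ 0 = 0) (hγ₁t : γ₁ tb = 0) (hγ₂0 : γ₂ 0 = 0) (hγ₂t : γ₂ tb = 0)
    (hφ0 : φ₁ 0 = φ₂ 0) (hφt : φ₁ tb = φ₂ tb)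
    (zeta : ℝ) (hzdef : zeta = 4 * ((Mγ : ℝ) + (Lγ : ℝ)) * ((Mφ : ℝ) + (Lφ : ℝ)))
    (hzeta : zeta < 1)
    (lam : ℝ → ℝ)
    (hlam_bij : Set.BijOn lam (Set.Icc 0 tb) (Set.Icc 0 tb))
    (hlam_mono : StrictMonoOn lam (Set.Icc 0 tb))
    (hlam_sol : ∀ s ∈ Set.Icc 0 tb, Qphi γ₁ γ₂ φ₁ φ₂ s (lam s) = 0)
    (hlam0 : lam 0 = 0) (hlamt : lam tb = tb) :
    -- ρ is Lipschitz on [0,1] × [0,t̄]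
    (∃ K : NNReal, LipschitzOnWith K (heisRho γ₁ γ₂ φ₁ φ₂ lam)
      (Set.Icc 0 1 ×ˢ Set.Icc 0 tb)) ∧
    -- (a) ρ(∂Q) = p₁([0,t̄]) ∪ p₂([0,t̄])
    (heisRho γ₁ γ₂ φ₁ φ₂ lam '' frontier (Set.Ioo (0:ℝ) 1 ×ˢ Set.Ioo (0:ℝ) tb)
      = heisP γ₁ φ₁ '' Set.Icc 0 tb ∪ heisP γ₂ φ₂ '' Set.Icc 0 tb) ∧
    -- (b) ρ(h,s) = (1-h)·ρ(0,s) + h·ρ(1,s)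
    (∀ h s : ℝ, heisRho γ₁ γ₂ φ₁ φ₂ lam (h, s)
      = (1 - h) • heisRho γ₁ γ₂ φ₁ φ₂ lam (0, s)
        + h • heisRho γ₁ γ₂ φ₁ φ₂ lam (1, s)) ∧
    -- (c) ∂ρ/∂h is the horizontal vector p₂(λ(s)) - p₁(s) at every point ρ(h,s)
    (∀ h ∈ Set.Ioo (0:ℝ) 1, ∀ s ∈ Set.Ioo 0 tb,
      HasDerivAt (fun h' : ℝ => heisRho γ₁ γ₂ φ₁ φ₂ lam (h', s))
        (heisRho γ₁ γ₂ φ₁ φ₂ lam (1, s) - heisRho γ₁ γ₂ φ₁ φ₂ lam (0, s)) h ∧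
      heisRho γ₁ γ₂ φ₁ φ₂ lam (1, s) - heisRho γ₁ γ₂ φ₁ φ₂ lam (0, s)
        = heisP γ₂ φ₂ (lam s) - heisP γ₁ φ₁ s ∧
      (heisP γ₂ φ₂ (lam s) - heisP γ₁ φ₁ s).2.2
        = 2 * (heisRho γ₁ γ₂ φ₁ φ₂ lam (h, s)).2.1
            * (heisP γ₂ φ₂ (lam s) - heisP γ₁ φ₁ s).1
          - 2 * (heisRho γ₁ γ₂ φ₁ φ₂ lam (h, s)).1
            * (heisP γ₂ φ₂ (lam s) - heisP γ₁ φ₁ s).2.1) := by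
  -- basic computations
  have hrho0 : ∀ s : ℝ, heisRho γ₁ γ₂ φ₁ φ₂ lam (0, s) = heisP γ₁ φ₁ s := by
    intro s; simp [heisRho]
  have hrho1 : ∀ s : ℝ, heisRho γ₁ γ₂ φ₁ φ₂ lam (1, s) = heisP γ₂ φ₂ (lam s) := by
    intro s; simp [heisRho]
  refine ⟨?_, ?_, ?_, ?_⟩
  · -- Lipschitz
    have hLipR : ∀ (f : ℝ → ℝ) (L : NNReal), LipschitzOnWith L f (Icc 0 tb) →
        ∀ x ∈ Icc 0 tb, ∀ y ∈ Icc 0 tb, |f x - f y| ≤ (L : ℝ) * |x - y| := by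
      intro f L hf x hx y hy
      have := lipschitzOnWith_iff_dist_le_mul.mp hf x hx y hy
      rwa [Real.dist_eq, Real.dist_eq] at this
    have hγ₁R := hLipR _ _ hγ₁lip
    have hγ₂R := hLipR _ _ hγ₂lip
    have hφ₁R := hLipR _ _ hφ₁lip
    have hφ₂R := hLipR _ _ hφ₂lip
    have hz0 : 0 ≤ zeta := by rw [hzdef]; positivity
    obtain ⟨Kl, hKl⟩ : ∃ x : ℝ, x = (1 + zeta) / (1 - zeta) := ⟨_, rfl⟩
    have hKl0 : 0 ≤ Kl := hKl ▸ div_nonneg (by linarith) (by linarith)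
    have hlamlip : ∀ x ∈ Icc 0 tb, ∀ y ∈ Icc 0 tb, |lam x - lam y| ≤ Kl * |x - y| := by
      intro x hx y hy
      rw [hKl]
      exact lam_lip_aux Mγ.coe_nonneg Lγ.coe_nonneg Mφ.coe_nonneg Lφ.coe_nonneg hzdef hzeta
        hγ₁R hγ₂R hφ₁R hφ₂R hγ₁bd hγ₂bd hφ₁bd hφ₂bd hlam_bij.mapsTo
        (fun z hz => hlam_sol z hz) hx hy
    obtain ⟨CP, hCP⟩ : ∃ x : ℝ,
        x = 1 + (Lφ : ℝ) + (Lγ : ℝ) + 2 * ((Lγ : ℝ) * (Mφ : ℝ) + (Mγ : ℝ) * (Lφ : ℝ)) :=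
      ⟨_, rfl⟩
    have hCP0 : 0 ≤ CP := by rw [hCP]; positivity
    obtain ⟨BP, hBP⟩ : ∃ x : ℝ, x = (Mφ : ℝ) + (Mγ : ℝ) + (tb + 2 * (Mγ : ℝ) * (Mφ : ℝ)) :=
      ⟨_, rfl⟩
    have hBP0 : 0 ≤ BP := by rw [hBP]; positivity
    have hC0 : 0 ≤ CP * (1 + Kl) := mul_nonneg hCP0 (by linarith)
    have hLφCP : (Lφ : ℝ) ≤ CP := by
      rw [hCP]
      nlinarith [mul_nonneg Lγ.coe_nonneg Mφ.coe_nonneg,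
        mul_nonneg Mγ.coe_nonneg Lφ.coe_nonneg, Lγ.coe_nonneg]
    have hLγCP : (Lγ : ℝ) ≤ CP := by
      rw [hCP]
      nlinarith [mul_nonneg Lγ.coe_nonneg Mφ.coe_nonneg,
        mul_nonneg Mγ.coe_nonneg Lφ.coe_nonneg, Lφ.coe_nonneg]
    have h3CP : 1 + 2 * ((Lγ : ℝ) * (Mφ : ℝ) + (Mγ : ℝ) * (Lφ : ℝ)) ≤ CP := by
      rw [hCP]
      nlinarith [Lγ.coe_nonneg, Lφ.coe_nonneg]
    have hMφBP : (Mφ : ℝ) ≤ BP := by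
      rw [hBP]
      nlinarith [Mγ.coe_nonneg, mul_nonneg Mγ.coe_nonneg Mφ.coe_nonneg, htb.le]
    have hMγBP : (Mγ : ℝ) ≤ BP := by
      rw [hBP]
      nlinarith [Mφ.coe_nonneg, mul_nonneg Mγ.coe_nonneg Mφ.coe_nonneg, htb.le]
    refine ⟨Real.toNNReal (2 * (CP * (1 + Kl)) + 2 * BP), ?_⟩
    rw [lipschitzOnWith_iff_dist_le_mul]
    rintro ⟨h, s⟩ ⟨hh, hs⟩ ⟨h', s'⟩ ⟨hh', hs'⟩
    have hsI : s ∈ Icc 0 tb := hs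
    have hsI' : s' ∈ Icc 0 tb := hs'
    have huI : lam s ∈ Icc 0 tb := hlam_bij.mapsTo hsI
    have huI' : lam s' ∈ Icc 0 tb := hlam_bij.mapsTo hsI'
    have hd0 : 0 ≤ |s - s'| := abs_nonneg _
    have hDu : |lam s - lam s'| ≤ Kl * |s - s'| := hlamlip s hsI s' hsI'
    have hKcoe : ((Real.toNNReal (2 * (CP * (1 + Kl)) + 2 * BP) : NNReal) : ℝ)
        = 2 * (CP * (1 + Kl)) + 2 * BP :=
      Real.coe_toNNReal _ (by linarith)
    have hφ₁d : |φ₁ s - φ₁ s'| ≤ CP * (1 + Kl) * |s - s'| :=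
      trans_le_Cd (hφ₁R s hsI s' hsI') hLφCP hKl0 hCP0 hd0
    have hφ₂d : |φ₂ (lam s) - φ₂ (lam s')| ≤ CP * (1 + Kl) * |s - s'| :=
      trans_le_Cd' (hφ₂R _ huI _ huI') hDu (abs_nonneg _) Lφ.coe_nonneg hLφCP hKl0 hCP0 hd0
    have hγ₁d : |γ₁ s - γ₁ s'| ≤ CP * (1 + Kl) * |s - s'| :=
      trans_le_Cd (hγ₁R s hsI s' hsI') hLγCP hKl0 hCP0 hd0
    have hγ₂d : |γ₂ (lam s) - γ₂ (lam s')| ≤ CP * (1 + Kl) * |s - s'| :=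
      trans_le_Cd' (hγ₂R _ huI _ huI') hDu (abs_nonneg _) Lγ.coe_nonneg hLγCP hKl0 hCP0 hd0
    have hT₁d : |(s + 2 * γ₁ s * φ₁ s) - (s' + 2 * γ₁ s' * φ₁ s')|
        ≤ CP * (1 + Kl) * |s - s'| :=
      trans_le_Cd (heisP3_lip hγ₁R hφ₁R hγ₁bd hφ₁bd hsI hsI') h3CP hKl0 hCP0 hd0
    have hT₂d : |(lam s + 2 * γ₂ (lam s) * φ₂ (lam s))
          - (lam s' + 2 * γ₂ (lam s') * φ₂ (lam s'))|
        ≤ CP * (1 + Kl) * |s - s'| :=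
      trans_le_Cd' (heisP3_lip hγ₂R hφ₂R hγ₂bd hφ₂bd huI huI') hDu (abs_nonneg _)
        (by positivity) h3CP hKl0 hCP0 hd0
    have hφ₁b : |φ₁ s'| ≤ BP := (hφ₁bd s' hsI').trans hMφBP
    have hφ₂b : |φ₂ (lam s')| ≤ BP := (hφ₂bd _ huI').trans hMφBP
    have hγ₁b : |γ₁ s'| ≤ BP := (hγ₁bd s' hsI').trans hMγBP
    have hγ₂b : |γ₂ (lam s')| ≤ BP := (hγ₂bd _ huI').trans hMγBP
    have hT₁b : |s' + 2 * γ₁ s' * φ₁ s'| ≤ BP :=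
      third_bound hsI'.1 hsI'.2 (hγ₁bd s' hsI') (hφ₁bd s' hsI') Mγ.coe_nonneg hBP
    have hT₂b : |lam s' + 2 * γ₂ (lam s') * φ₂ (lam s')| ≤ BP :=
      third_bound huI'.1 huI'.2 (hγ₂bd _ huI') (hφ₂bd _ huI') Mγ.coe_nonneg hBP
    have hcomp : ∀ w : ℝ × ℝ, heisRho γ₁ γ₂ φ₁ φ₂ lam w =
        ((1 - w.1) * φ₁ w.2 + w.1 * φ₂ (lam w.2),
         (1 - w.1) * γ₁ w.2 + w.1 * γ₂ (lam w.2),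
         (1 - w.1) * (w.2 + 2 * γ₁ w.2 * φ₁ w.2)
           + w.1 * (lam w.2 + 2 * γ₂ (lam w.2) * φ₂ (lam w.2))) := by
      intro w
      simp [heisRho, heisP, Prod.smul_mk, Prod.mk_add_mk, smul_eq_mul]
    rw [hcomp, hcomp, hKcoe]
    simp only [Prod.dist_eq, Real.dist_eq]
    have hdm : |s - s'| ≤ max |h - h'| |s - s'| := le_max_right _ _
    have hem : |h - h'| ≤ max |h - h'| |s - s'| := le_max_left _ _
    exact max_le
      (rho_comp_bound hh.1 hh.2 hφ₁d hφ₂d hφ₁b hφ₂b hC0 hBP0 hdm hem)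
      (max_le (rho_comp_bound hh.1 hh.2 hγ₁d hγ₂d hγ₁b hγ₂b hC0 hBP0 hdm hem)
        (rho_comp_bound hh.1 hh.2 hT₁d hT₂d hT₁b hT₂b hC0 hBP0 hdm hem))
  · -- (a)
    have hfr : frontier (Set.Ioo (0:ℝ) 1 ×ˢ Set.Ioo (0:ℝ) tb)
        = (Icc (0:ℝ) 1 ×ˢ ({0, tb} : Set ℝ)) ∪ (({0, 1} : Set ℝ) ×ˢ Icc 0 tb) := by
      rw [frontier_prod_eq, closure_Ioo (by norm_num : (0:ℝ) ≠ 1), closure_Ioo htb.ne,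
        frontier_Ioo one_pos, frontier_Ioo htb]
    have hP0 : heisP γ₂ φ₂ 0 = heisP γ₁ φ₁ 0 := by
      simp [heisP, hγ₁0, hγ₂0, hφ0]
    have hPt : heisP γ₂ φ₂ tb = heisP γ₁ φ₁ tb := by
      simp [heisP, hγ₁t, hγ₂t, hφt]
    have hrhos0 : ∀ h : ℝ, heisRho γ₁ γ₂ φ₁ φ₂ lam (h, 0) = heisP γ₁ φ₁ 0 := by
      intro h
      show (1 - h) • heisP γ₁ φ₁ 0 + h • heisP γ₂ φ₂ (lam 0) = heisP γ₁ φ₁ 0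
      rw [hlam0, hP0]; module
    have hrhost : ∀ h : ℝ, heisRho γ₁ γ₂ φ₁ φ₂ lam (h, tb) = heisP γ₁ φ₁ tb := by
      intro h
      show (1 - h) • heisP γ₁ φ₁ tb + h • heisP γ₂ φ₂ (lam tb) = heisP γ₁ φ₁ tb
      rw [hlamt, hPt]; module
    ext p
    constructor
    · rintro ⟨⟨h, s⟩, hmem, rfl⟩
      rw [hfr] at hmem
      rcases hmem with ⟨hh, hs⟩ | ⟨hh, hs⟩
      · simp only [Set.mem_insert_iff, Set.mem_singleton_iff] at hs
        rcases hs with rfl | h2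
        · exact Or.inl ⟨0, ⟨le_refl _, htb.le⟩, (hrhos0 h).symm⟩
        · rw [h2]
          exact Or.inl ⟨tb, ⟨htb.le, le_refl _⟩, (hrhost h).symm⟩
      · simp only [Set.mem_insert_iff, Set.mem_singleton_iff] at hh
        rcases hh with rfl | h2
        · exact Or.inl ⟨s, hs, (hrho0 s).symm⟩
        · rw [h2]
          exact Or.inr ⟨lam s, hlam_bij.mapsTo hs, (hrho1 s).symm⟩
    · rintro (⟨s, hs, rfl⟩ | ⟨u, hu, rfl⟩)
      · exact ⟨(0, s), by rw [hfr]; exact Or.inr ⟨by simp, hs⟩, hrho0 s⟩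
      · obtain ⟨s, hs, rfl⟩ := hlam_bij.surjOn hu
        exact ⟨(1, s), by rw [hfr]; exact Or.inr ⟨by simp, hs⟩, hrho1 s⟩
  · -- (b)
    intro h s
    rw [hrho0, hrho1]
    rfl
  · -- (c)
    intro h hh s hs
    have hsI : s ∈ Icc 0 tb := Ioo_subset_Icc_self hs
    have hQ : lam s - s + 2 * (γ₂ (lam s) - γ₁ s) * (φ₂ (lam s) + φ₁ s) = 0 := hlam_sol s hsI
    have key : heisRho γ₁ γ₂ φ₁ φ₂ lam (1, s) - heisRho γ₁ γ₂ φ₁ φ₂ lam (0, s)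
        = heisP γ₂ φ₂ (lam s) - heisP γ₁ φ₁ s := by rw [hrho0, hrho1]
    refine ⟨?_, key, ?_⟩
    · rw [key]
      have d1 : HasDerivAt (fun h' : ℝ => (1 - h') • heisP γ₁ φ₁ s)
          ((-1 : ℝ) • heisP γ₁ φ₁ s) h := by
        simpa using (((hasDerivAt_id h).const_sub 1).smul_const (heisP γ₁ φ₁ s))
      have d2 : HasDerivAt (fun h' : ℝ => h' • heisP γ₂ φ₂ (lam s))
          ((1 : ℝ) • heisP γ₂ φ₂ (lam s)) h :=
        (hasDerivAt_id h).smul_const _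
      have heq : heisP γ₂ φ₂ (lam s) - heisP γ₁ φ₁ s
          = (-1 : ℝ) • heisP γ₁ φ₁ s + (1 : ℝ) • heisP γ₂ φ₂ (lam s) := by module
      rw [heq]
      exact d1.add d2
    · simp only [heisRho, heisP, Prod.smul_mk, Prod.mk_add_mk, smul_eq_mul,
        Prod.mk_sub_mk, Prod.snd_sub, Prod.fst_sub]
      ring_nf
      linear_combination hQ
end
end

section
/- Assume D is lenticular (γ₁ convex and γ₂ concave on I) and ζ < (√129 − 11)/4. Then the map F : Q → ℝ², F(h,s) = (ρ₂(h,s), ρ₃(h,s) − 2ρ₁(h,s)ρ₂(h,s)) — i.e. the composition of ρ with the projection π(x,y,t) = (y, t−2xy) onto W along the integral curves of X — is a bijection from Q = (0,1)×I onto D. -/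
open Set

noncomputable section

/-- The lenticular domain `D = {(y,t) : t ∈ (0,t̄), γ₁(t) < y < γ₂(t)}`. -/
def lensD (γ₁ γ₂ : ℝ → ℝ) (tb : ℝ) : Set (ℝ × ℝ) :=
  {w | w.2 ∈ Set.Ioo 0 tb ∧ γ₁ w.2 < w.1 ∧ w.1 < γ₂ w.2}

noncomputable def Wc (p c : ℝ) : ℝ := max 0 (min p c)

lemma Wc_mem {p c : ℝ} (hc : 0 ≤ c) : 0 ≤ Wc p c ∧ Wc p c ≤ c :=
  ⟨le_max_left _ _, max_le hc (min_le_right _ _)⟩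

lemma Wc_diff (p₁ p₂ c₁ c₂ : ℝ) : |Wc p₂ c₂ - Wc p₁ c₁| ≤ max |p₂ - p₁| |c₂ - c₁| := by
  have h1 : |Wc p₂ c₂ - Wc p₁ c₁| ≤ max |(0:ℝ) - 0| |min p₂ c₂ - min p₁ c₁| :=
    abs_max_sub_max_le_max _ _ _ _
  have h2 : |min p₂ c₂ - min p₁ c₁| ≤ max |p₂ - p₁| |c₂ - c₁| := abs_min_sub_min_le_max _ _ _ _
  simp only [sub_self, abs_zero] at h1
  refine h1.trans (max_le ?_ h2)
  positivity

lemma sq_div_diff_c {w c₁ c₂ : ℝ} (h0 : 0 ≤ w) (hw1 : w ≤ c₁) (hw2 : w ≤ c₂)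
    (hc1 : 0 < c₁) (hc2 : 0 < c₂) : |w^2/c₂ - w^2/c₁| ≤ |c₂ - c₁| := by
  have he : w^2/c₂ - w^2/c₁ = w^2*(c₁-c₂)/(c₁*c₂) := by field_simp
  rw [he, abs_div, abs_of_pos (mul_pos hc1 hc2), div_le_iff₀ (mul_pos hc1 hc2), abs_mul,
    abs_of_nonneg (sq_nonneg w), abs_sub_comm c₁ c₂]
  have hww : w^2 ≤ c₁*c₂ := by nlinarith
  nlinarith [abs_nonneg (c₂ - c₁)]

lemma sq_div_diff_w {w₁ w₂ c : ℝ} (h1 : 0 ≤ w₁) (h2 : 0 ≤ w₂) (hw1 : w₁ ≤ c) (hw2 : w₂ ≤ c)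
    (hc : 0 < c) : |w₂^2/c - w₁^2/c| ≤ 2*|w₂ - w₁| := by
  rw [div_sub_div_same, abs_div, abs_of_pos hc, div_le_iff₀ hc]
  have he : |w₂^2 - w₁^2| = |w₂ - w₁| * |w₂ + w₁| := by rw [← abs_mul]; ring_nf
  rw [he]
  have hle : |w₂ + w₁| ≤ 2*c := by rw [abs_of_nonneg (by linarith)]; linarith
  nlinarith [abs_nonneg (w₂ - w₁)]

lemma gdiv_diff {w₁ w₂ c₁ c₂ : ℝ} (h1 : 0 ≤ w₁) (h1' : w₁ ≤ c₁) (h2 : 0 ≤ w₂) (h2' : w₂ ≤ c₂)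
    (hc1 : 0 < c₁) (hc2 : 0 < c₂) :
    |w₂^2/c₂ - w₁^2/c₁| ≤ 2*|w₂ - w₁| + |c₂ - c₁| := by
  rcases le_total c₁ c₂ with h | h
  · calc |w₂^2/c₂ - w₁^2/c₁| ≤ |w₂^2/c₂ - w₁^2/c₂| + |w₁^2/c₂ - w₁^2/c₁| := abs_sub_le _ _ _
    _ ≤ 2*|w₂-w₁| + |c₂-c₁| :=
      add_le_add (sq_div_diff_w h1 h2 (h1'.trans h) h2' hc2)
        (sq_div_diff_c h1 h1' (h1'.trans h) hc1 hc2)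
  · calc |w₂^2/c₂ - w₁^2/c₁| ≤ |w₂^2/c₂ - w₂^2/c₁| + |w₂^2/c₁ - w₁^2/c₁| := abs_sub_le _ _ _
    _ ≤ |c₂-c₁| + 2*|w₂-w₁| :=
      add_le_add (sq_div_diff_c h2 (h2'.trans h) h2' hc1 hc2)
        (sq_div_diff_w h1 h2 h1' (h2'.trans h) hc1)
    _ = 2*|w₂-w₁| + |c₂-c₁| := by ring

set_option maxHeartbeats 1000000 in
lemma key_core
    (Mg Lg Mf Lf z : ℝ) (hMg : 0 ≤ Mg) (hLg : 0 ≤ Lg) (hMf : 0 ≤ Mf) (hLf : 0 ≤ Lf)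
    (hz0 : 0 ≤ z) (hz4 : Mg*Lf + Mf*Lg ≤ z/4) (hz : z ≤ 1/10)
    (y s₁ s₂ l₁ l₂ a₁ a₂ b₁ b₂ u₁ u₂ v₁ v₂ : ℝ)
    (hs : s₁ < s₂) (hl : l₁ < l₂)
    (ha1 : |a₁| ≤ Mg) (ha2 : |a₂| ≤ Mg) (hb1 : |b₁| ≤ Mg) (hb2 : |b₂| ≤ Mg)
    (hu1 : |u₁| ≤ Mf) (hu2 : |u₂| ≤ Mf) (hv1 : |v₁| ≤ Mf) (hv2 : |v₂| ≤ Mf)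
    (hda : |a₂ - a₁| ≤ Lg*(s₂-s₁)) (hdb : |b₂ - b₁| ≤ Lg*(l₂-l₁))
    (hdu : |u₂ - u₁| ≤ Lf*(s₂-s₁)) (hdv : |v₂ - v₁| ≤ Lf*(l₂-l₁))
    (hq1 : l₁ = s₁ - 2*(b₁-a₁)*(u₁+v₁)) (hq2 : l₂ = s₂ - 2*(b₂-a₂)*(u₂+v₂))
    (hba1 : 0 < b₁ - a₁) (hba2 : 0 < b₂ - a₂) :
    (s₂-s₁)/9 ≤ (s₂ - 4*u₂*Wc (y-a₂) (b₂-a₂) - 2*(Wc (y-a₂) (b₂-a₂))^2*(v₂-u₂)/(b₂-a₂))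
      - (s₁ - 4*u₁*Wc (y-a₁) (b₁-a₁) - 2*(Wc (y-a₁) (b₁-a₁))^2*(v₁-u₁)/(b₁-a₁)) ∧
    (s₂ - 4*u₂*Wc (y-a₂) (b₂-a₂) - 2*(Wc (y-a₂) (b₂-a₂))^2*(v₂-u₂)/(b₂-a₂))
      - (s₁ - 4*u₁*Wc (y-a₁) (b₁-a₁) - 2*(Wc (y-a₁) (b₁-a₁))^2*(v₁-u₁)/(b₁-a₁))
      ≤ 2*(s₂-s₁) := by
  set w₁ := Wc (y-a₁) (b₁-a₁) with hw₁def
  set w₂ := Wc (y-a₂) (b₂-a₂) with hw₂def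
  obtain ⟨hw1n, hw1c⟩ := Wc_mem (p := y-a₁) hba1.le
  obtain ⟨hw2n, hw2c⟩ := Wc_mem (p := y-a₂) hba2.le
  set ds := s₂ - s₁ with hdsdef
  set dl := l₂ - l₁ with hdldef
  rw [← hw₁def] at hw1n hw1c
  rw [← hw₂def] at hw2n hw2c
  have hdwraw : |w₂ - w₁| ≤ max |(y-a₂)-(y-a₁)| |(b₂-a₂)-(b₁-a₁)| := Wc_diff _ _ _ _
  clear_value w₁ w₂ ds dl
  have hds : 0 < ds := by rw [hdsdef]; linarith
  have hdl : 0 < dl := by rw [hdldef]; linarith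
  -- step 1 : dl ≤ (11/9) ds
  have habs_uv2 : |u₂+v₂| ≤ 2*Mf := by
    calc |u₂+v₂| ≤ |u₂| + |v₂| := abs_add_le _ _
    _ ≤ 2*Mf := by linarith
  have habs_c1 : |b₁-a₁| ≤ 2*Mg := by
    calc |b₁-a₁| ≤ |b₁| + |a₁| := abs_sub _ _
    _ ≤ 2*Mg := by linarith
  have habs_c2 : |b₂-a₂| ≤ 2*Mg := by
    calc |b₂-a₂| ≤ |b₂| + |a₂| := abs_sub _ _
    _ ≤ 2*Mg := by linarith
  have hdc : |(b₂-a₂) - (b₁-a₁)| ≤ Lg*ds + Lg*dl := by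
    calc |(b₂-a₂) - (b₁-a₁)| = |(b₂-b₁) - (a₂-a₁)| := by ring_nf
    _ ≤ |b₂-b₁| + |a₂-a₁| := abs_sub _ _
    _ ≤ Lg*ds + Lg*dl := by linarith
  have hprod : |(b₂-a₂)*(u₂+v₂) - (b₁-a₁)*(u₁+v₁)| ≤ (Lg*ds+Lg*dl)*(2*Mf) + (2*Mg)*(Lf*ds+Lf*dl) := by
    have he : (b₂-a₂)*(u₂+v₂) - (b₁-a₁)*(u₁+v₁)
        = ((b₂-a₂)-(b₁-a₁))*(u₂+v₂) + (b₁-a₁)*((u₂+v₂)-(u₁+v₁)) := by ring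
    have hduv : |(u₂+v₂)-(u₁+v₁)| ≤ Lf*ds + Lf*dl := by
      calc |(u₂+v₂)-(u₁+v₁)| = |(u₂-u₁)+(v₂-v₁)| := by ring_nf
      _ ≤ |u₂-u₁| + |v₂-v₁| := abs_add_le _ _
      _ ≤ Lf*ds + Lf*dl := by linarith
    calc |(b₂-a₂)*(u₂+v₂) - (b₁-a₁)*(u₁+v₁)|
        = |((b₂-a₂)-(b₁-a₁))*(u₂+v₂) + (b₁-a₁)*((u₂+v₂)-(u₁+v₁))| := by rw [he]
      _ ≤ |((b₂-a₂)-(b₁-a₁))*(u₂+v₂)| + |(b₁-a₁)*((u₂+v₂)-(u₁+v₁))| := abs_add_le _ _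
      _ = |(b₂-a₂)-(b₁-a₁)| * |u₂+v₂| + |b₁-a₁| * |(u₂+v₂)-(u₁+v₁)| := by rw [abs_mul, abs_mul]
      _ ≤ (Lg*ds+Lg*dl)*(2*Mf) + (2*Mg)*(Lf*ds+Lf*dl) :=
          add_le_add
            (mul_le_mul hdc habs_uv2 (abs_nonneg _)
              (by have := mul_nonneg hLg hds.le; have := mul_nonneg hLg hdl.le; linarith))
            (mul_le_mul habs_c1 hduv (abs_nonneg _) (by positivity))
  have hdlds : |dl - ds| ≤ z*(ds+dl) := by
    have he : dl - ds = -2*((b₂-a₂)*(u₂+v₂) - (b₁-a₁)*(u₁+v₁)) := by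
      rw [hdldef, hdsdef, hq1, hq2]; ring
    calc |dl - ds| = 2*|(b₂-a₂)*(u₂+v₂) - (b₁-a₁)*(u₁+v₁)| := by
          rw [he, abs_mul]; norm_num
      _ ≤ 2*((Lg*ds+Lg*dl)*(2*Mf) + (2*Mg)*(Lf*ds+Lf*dl)) := by linarith
      _ = 4*(Mg*Lf + Mf*Lg)*(ds+dl) := by ring
      _ ≤ z*(ds+dl) := by
          linarith [mul_le_mul_of_nonneg_right hz4 (by linarith : (0:ℝ) ≤ ds+dl)]
  have hdl9 : dl ≤ (11/9)*ds := by
    have h1 : dl - ds ≤ z*(ds+dl) := (abs_le.mp hdlds).2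
    have hzds : z*ds ≤ (1/10)*ds := mul_le_mul_of_nonneg_right hz hds.le
    have hzdl : z*dl ≤ (1/10)*dl := mul_le_mul_of_nonneg_right hz hdl.le
    have he' : z*(ds+dl) = z*ds + z*dl := by ring
    linarith
  -- step 2 : the main differences
  have hdw : |w₂ - w₁| ≤ (20/9)*(Lg*ds) := by
    have h1 := hdwraw
    have h2 : |(y-a₂)-(y-a₁)| = |a₂-a₁| := by
      have he : (y-a₂)-(y-a₁) = -(a₂-a₁) := by ring
      rw [he, abs_neg]
    refine h1.trans (max_le ?_ ?_)
    · rw [h2]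
      linarith [mul_nonneg hLg hds.le]
    · linarith [hdc, mul_le_mul_of_nonneg_left hdl9 hLg, mul_nonneg hLg hds.le]
  have hw2M : w₂ ≤ 2*Mg := hw2c.trans ((le_abs_self _).trans habs_c2)
  have hw1M : w₁ ≤ 2*Mg := hw1c.trans ((le_abs_self _).trans habs_c1)
  have hdA : |4*u₂*w₂ - 4*u₁*w₁| ≤ (8*(Mg*Lf) + (80/9)*(Mf*Lg))*ds := by
    have he : 4*u₂*w₂ - 4*u₁*w₁ = 4*((u₂-u₁)*w₂ + u₁*(w₂-w₁)) := by ring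
    calc |4*u₂*w₂ - 4*u₁*w₁| = 4*|(u₂-u₁)*w₂ + u₁*(w₂-w₁)| := by
          rw [he, abs_mul]; norm_num
      _ ≤ 4*(|u₂-u₁| * |w₂| + |u₁| * |w₂-w₁|) := by
          have := abs_add_le ((u₂-u₁)*w₂) (u₁*(w₂-w₁))
          rw [abs_mul, abs_mul] at this; linarith
      _ ≤ 4*((Lf*ds)*(2*Mg) + Mf*((20/9)*(Lg*ds))) := by
          have hx : |u₂-u₁| * |w₂| ≤ (Lf*ds)*(2*Mg) := by
            rw [abs_of_nonneg hw2n]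
            exact mul_le_mul hdu hw2M hw2n (mul_nonneg hLf hds.le)
          have hy : |u₁| * |w₂-w₁| ≤ Mf*((20/9)*(Lg*ds)) :=
            mul_le_mul hu1 hdw (abs_nonneg _) hMf
          linarith
      _ = (8*(Mg*Lf) + (80/9)*(Mf*Lg))*ds := by ring
  set g₁ := w₁^2/(b₁-a₁) with hg₁def
  set g₂ := w₂^2/(b₂-a₂) with hg₂def
  clear_value g₁ g₂
  have hg1n : 0 ≤ g₁ := by rw [hg₁def]; positivity
  have hg1w : g₁ ≤ w₁ := by
    rw [hg₁def, div_le_iff₀ hba1]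
    linarith [mul_le_mul_of_nonneg_left hw1c hw1n]
  have hdg : |g₂ - g₁| ≤ (60/9)*(Lg*ds) := by
    have h := gdiv_diff hw1n hw1c hw2n hw2c hba1 hba2
    rw [← hg₁def, ← hg₂def] at h
    have hdc' : |(b₂-a₂)-(b₁-a₁)| ≤ (20/9)*(Lg*ds) := by
      linarith [hdc, mul_le_mul_of_nonneg_left hdl9 hLg, mul_nonneg hLg hds.le]
    calc |g₂ - g₁| ≤ 2*|w₂-w₁| + |(b₂-a₂)-(b₁-a₁)| := h
      _ ≤ 2*((20/9)*(Lg*ds)) + (20/9)*(Lg*ds) := by linarith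
      _ = (60/9)*(Lg*ds) := by ring
  have habs_vu2 : |v₂-u₂| ≤ 2*Mf := by
    calc |v₂-u₂| ≤ |v₂| + |u₂| := abs_sub _ _
    _ ≤ 2*Mf := by linarith
  have hdvu : |(v₂-u₂)-(v₁-u₁)| ≤ (20/9)*(Lf*ds) := by
    calc |(v₂-u₂)-(v₁-u₁)| = |(v₂-v₁)-(u₂-u₁)| := by ring_nf
      _ ≤ |v₂-v₁| + |u₂-u₁| := abs_sub _ _
      _ ≤ (20/9)*(Lf*ds) := by
          linarith [mul_le_mul_of_nonneg_left hdl9 hLf, mul_nonneg hLf hds.le]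
  have hdB : |2*(g₂*(v₂-u₂)) - 2*(g₁*(v₁-u₁))| ≤ ((80/9)*(Mg*Lf) + (240/9)*(Mf*Lg))*ds := by
    have he : 2*(g₂*(v₂-u₂)) - 2*(g₁*(v₁-u₁)) = 2*((g₂-g₁)*(v₂-u₂) + g₁*((v₂-u₂)-(v₁-u₁))) := by
      ring
    calc |2*(g₂*(v₂-u₂)) - 2*(g₁*(v₁-u₁))|
        = 2*|(g₂-g₁)*(v₂-u₂) + g₁*((v₂-u₂)-(v₁-u₁))| := by rw [he, abs_mul]; norm_num
      _ ≤ 2*(|g₂-g₁| * |v₂-u₂| + |g₁| * |(v₂-u₂)-(v₁-u₁)|) := by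
          have := abs_add_le ((g₂-g₁)*(v₂-u₂)) (g₁*((v₂-u₂)-(v₁-u₁)))
          rw [abs_mul, abs_mul] at this; linarith
      _ ≤ 2*(((60/9)*(Lg*ds))*(2*Mf) + (2*Mg)*((20/9)*(Lf*ds))) := by
          rw [abs_of_nonneg hg1n]
          have hx : |g₂-g₁| * |v₂-u₂| ≤ ((60/9)*(Lg*ds))*(2*Mf) :=
            mul_le_mul hdg habs_vu2 (abs_nonneg _)
              (by have := mul_nonneg hLg hds.le; linarith)
          have hy : g₁ * |(v₂-u₂)-(v₁-u₁)| ≤ (2*Mg)*((20/9)*(Lf*ds)) :=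
            mul_le_mul (by linarith) hdvu (abs_nonneg _) (by positivity)
          linarith
      _ = ((80/9)*(Mg*Lf) + (240/9)*(Mf*Lg))*ds := by ring
  -- assemble
  have hsum : |4*u₂*w₂ - 4*u₁*w₁| + |2*(g₂*(v₂-u₂)) - 2*(g₁*(v₁-u₁))| ≤ (8/9)*ds := by
    have h1 : (8*(Mg*Lf) + (80/9)*(Mf*Lg))*ds + ((80/9)*(Mg*Lf) + (240/9)*(Mf*Lg))*ds
        ≤ ((320/9)*(Mg*Lf + Mf*Lg))*ds := by
      linarith [mul_nonneg (mul_nonneg hMg hLf) hds.le, mul_nonneg (mul_nonneg hMf hLg) hds.le]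
    have h2 : ((320/9)*(Mg*Lf + Mf*Lg))*ds ≤ ((320/9)*(z/4))*ds := by
      linarith [mul_le_mul_of_nonneg_right hz4 hds.le]
    have h3 : ((320/9)*(z/4))*ds ≤ (8/9)*ds := by
      linarith [mul_le_mul_of_nonneg_right hz hds.le]
    linarith
  have hB2 : 2*w₂^2*(v₂-u₂)/(b₂-a₂) = 2*(g₂*(v₂-u₂)) := by
    rw [hg₂def]; ring
  have hB1 : 2*w₁^2*(v₁-u₁)/(b₁-a₁) = 2*(g₁*(v₁-u₁)) := by
    rw [hg₁def]; ring
  rw [hB2, hB1]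
  constructor
  · have ha' := le_abs_self (4*u₂*w₂ - 4*u₁*w₁)
    have ha'' := neg_abs_le (4*u₂*w₂ - 4*u₁*w₁)
    have hb' := le_abs_self (2*(g₂*(v₂-u₂)) - 2*(g₁*(v₁-u₁)))
    have hb'' := neg_abs_le (2*(g₂*(v₂-u₂)) - 2*(g₁*(v₁-u₁)))
    linarith [hsum]
  · have ha' := le_abs_self (4*u₂*w₂ - 4*u₁*w₁)
    have ha'' := neg_abs_le (4*u₂*w₂ - 4*u₁*w₁)
    have hb' := le_abs_self (2*(g₂*(v₂-u₂)) - 2*(g₁*(v₁-u₁)))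
    have hb'' := neg_abs_le (2*(g₂*(v₂-u₂)) - 2*(g₁*(v₁-u₁)))
    linarith [hsum]

/-- The clamped time-coordinate of the projected ruled surface. -/
def Tf (γ₁ γ₂ φ₁ φ₂ lam : ℝ → ℝ) (y s : ℝ) : ℝ :=
  s - 4*φ₁ s*Wc (y - γ₁ s) (γ₂ (lam s) - γ₁ s)
    - 2*(Wc (y - γ₁ s) (γ₂ (lam s) - γ₁ s))^2*(φ₂ (lam s) - φ₁ s)/(γ₂ (lam s) - γ₁ s)

set_option maxHeartbeats 2000000 in
/-- the projection of the ruled surface along `X` is a bijection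
from `Q = (0,1) × I` onto the lenticular domain `D`. -/
theorem stmt_5 (tb : ℝ) (htb : 0 < tb)
    (γ₁ γ₂ φ₁ φ₂ : ℝ → ℝ) (Mγ Lγ Mφ Lφ : NNReal)
    (hγ₁lip : LipschitzOnWith Lγ γ₁ (Set.Icc 0 tb))
    (hγ₂lip : LipschitzOnWith Lγ γ₂ (Set.Icc 0 tb))
    (hγ₁bd : ∀ s ∈ Set.Icc 0 tb, |γ₁ s| ≤ (Mγ : ℝ))
    (hγ₂bd : ∀ s ∈ Set.Icc 0 tb, |γ₂ s| ≤ (Mγ : ℝ))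
    (hφ₁lip : LipschitzOnWith Lφ φ₁ (Set.Icc 0 tb))
    (hφ₂lip : LipschitzOnWith Lφ φ₂ (Set.Icc 0 tb))
    (hφ₁bd : ∀ s ∈ Set.Icc 0 tb, |φ₁ s| ≤ (Mφ : ℝ))
    (hφ₂bd : ∀ s ∈ Set.Icc 0 tb, |φ₂ s| ≤ (Mφ : ℝ))
    (hsign : ∀ t ∈ Set.Ioo 0 tb, γ₁ t < 0 ∧ 0 < γ₂ t)
    (hγ₁0 : γ₁ 0 = 0) (hγ₁t : γ₁ tb = 0) (hγ₂0 : γ₂ 0 = 0) (hγ₂t : γ₂ tb = 0)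
    (hφ0 : φ₁ 0 = φ₂ 0) (hφt : φ₁ tb = φ₂ tb)
    (hconv : ConvexOn ℝ (Set.Icc 0 tb) γ₁)
    (hconc : ConcaveOn ℝ (Set.Icc 0 tb) γ₂)
    (zeta : ℝ) (hzdef : zeta = 4 * ((Mγ : ℝ) + (Lγ : ℝ)) * ((Mφ : ℝ) + (Lφ : ℝ)))
    (hzeta : zeta < (Real.sqrt 129 - 11) / 4)
    (lam : ℝ → ℝ)
    (hlam_bij : Set.BijOn lam (Set.Icc 0 tb) (Set.Icc 0 tb))
    (hlam_mono : StrictMonoOn lam (Set.Icc 0 tb))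
    (hlam_sol : ∀ s ∈ Set.Icc 0 tb, Qphi γ₁ γ₂ φ₁ φ₂ s (lam s) = 0)
    (hlam0 : lam 0 = 0) (hlamt : lam tb = tb)
    :
    Set.BijOn
      (fun w : ℝ × ℝ =>
        ((heisRho γ₁ γ₂ φ₁ φ₂ lam w).2.1,
         (heisRho γ₁ γ₂ φ₁ φ₂ lam w).2.2
           - 2 * (heisRho γ₁ γ₂ φ₁ φ₂ lam w).1 * (heisRho γ₁ γ₂ φ₁ φ₂ lam w).2.1))
      (Set.Ioo (0:ℝ) 1 ×ˢ Set.Ioo (0:ℝ) tb) (lensD γ₁ γ₂ tb) := by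
  have hMγ0 : (0:ℝ) ≤ Mγ := Mγ.coe_nonneg
  have hLγ0 : (0:ℝ) ≤ Lγ := Lγ.coe_nonneg
  have hMφ0 : (0:ℝ) ≤ Mφ := Mφ.coe_nonneg
  have hLφ0 : (0:ℝ) ≤ Lφ := Lφ.coe_nonneg
  have hz0 : 0 ≤ zeta := by rw [hzdef]; positivity
  have hsqrt : Real.sqrt 129 ≤ 11.4 := by
    nlinarith [Real.sq_sqrt (by norm_num : (0:ℝ) ≤ 129), Real.sqrt_nonneg 129]
  have hz10 : zeta ≤ 1/10 := by
    have h1 : (Real.sqrt 129 - 11)/4 ≤ 1/10 := by nlinarith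
    linarith
  have hz4 : (Mγ:ℝ)*(Lφ:ℝ) + (Mφ:ℝ)*(Lγ:ℝ) ≤ zeta/4 := by
    rw [hzdef]; nlinarith [mul_nonneg hMγ0 hMφ0, mul_nonneg hLγ0 hLφ0]
  have hMφLγ : (Mφ:ℝ)*(Lγ:ℝ) ≤ zeta/4 := by nlinarith [mul_nonneg hMγ0 hLφ0]
  have h0I : (0:ℝ) ∈ Icc (0:ℝ) tb := ⟨le_refl 0, htb.le⟩
  have htbI : tb ∈ Icc (0:ℝ) tb := ⟨htb.le, le_refl tb⟩
  have lipabs : ∀ (K : NNReal) (f : ℝ → ℝ), LipschitzOnWith K f (Icc 0 tb) →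
      ∀ x ∈ Icc (0:ℝ) tb, ∀ z ∈ Icc (0:ℝ) tb, |f x - f z| ≤ (K:ℝ)*|x - z| := by
    intro K f hf x hx z hz
    have := hf.dist_le_mul x hx z hz
    simpa [Real.dist_eq] using this
  have hlamIcc : ∀ s ∈ Icc (0:ℝ) tb, lam s ∈ Icc (0:ℝ) tb := fun s hs => hlam_bij.mapsTo hs
  have hlamIoo : ∀ s ∈ Ioo (0:ℝ) tb, lam s ∈ Ioo (0:ℝ) tb := by
    intro s hs
    have hsI : s ∈ Icc (0:ℝ) tb := ⟨hs.1.le, hs.2.le⟩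
    constructor
    · have := hlam_mono h0I hsI hs.1; rwa [hlam0] at this
    · have := hlam_mono hsI htbI hs.2; rwa [hlamt] at this
  have hQs : ∀ s ∈ Icc (0:ℝ) tb, lam s = s - 2*(γ₂ (lam s) - γ₁ s)*(φ₁ s + φ₂ (lam s)) := by
    intro s hs
    have h := hlam_sol s hs
    simp only [Qphi] at h
    linear_combination h
  -- basic interior facts
  have base : ∀ s ∈ Ioo (0:ℝ) tb, γ₁ s < 0 ∧ 0 < γ₂ (lam s) ∧
      γ₂ (lam s) - γ₁ s ≤ (20/9)*((Lγ:ℝ)*min s (tb - s)) := by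
    intro s hs
    have hsI : s ∈ Icc (0:ℝ) tb := ⟨hs.1.le, hs.2.le⟩
    have hlI : lam s ∈ Icc (0:ℝ) tb := hlamIcc s hsI
    have hlO : lam s ∈ Ioo (0:ℝ) tb := hlamIoo s hs
    have ha : γ₁ s < 0 := (hsign s hs).1
    have hb : 0 < γ₂ (lam s) := (hsign _ hlO).2
    have hm0 : 0 < min s (tb - s) := lt_min hs.1 (by linarith [hs.2])
    have hml0 : 0 < min (lam s) (tb - lam s) := lt_min hlO.1 (by linarith [hlO.2])
    have haabs : |γ₁ s| ≤ (Lγ:ℝ)*min s (tb - s) := by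
      have h1 : |γ₁ s - γ₁ 0| ≤ (Lγ:ℝ)*|s - 0| := lipabs _ _ hγ₁lip s hsI 0 h0I
      have h2 : |γ₁ s - γ₁ tb| ≤ (Lγ:ℝ)*|s - tb| := lipabs _ _ hγ₁lip s hsI tb htbI
      rw [hγ₁0, sub_zero, sub_zero, abs_of_pos hs.1] at h1
      rw [hγ₁t, sub_zero, abs_of_neg (by linarith [hs.2] : s - tb < 0)] at h2
      rcases min_cases s (tb - s) with ⟨he, _⟩ | ⟨he, _⟩ <;> rw [he]
      · exact h1
      · calc |γ₁ s| ≤ (Lγ:ℝ)*(-(s - tb)) := h2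
          _ = (Lγ:ℝ)*(tb - s) := by ring
    have hbabs : |γ₂ (lam s)| ≤ (Lγ:ℝ)*min (lam s) (tb - lam s) := by
      have h1 : |γ₂ (lam s) - γ₂ 0| ≤ (Lγ:ℝ)*|lam s - 0| := lipabs _ _ hγ₂lip _ hlI 0 h0I
      have h2 : |γ₂ (lam s) - γ₂ tb| ≤ (Lγ:ℝ)*|lam s - tb| := lipabs _ _ hγ₂lip _ hlI tb htbI
      rw [hγ₂0, sub_zero, sub_zero, abs_of_pos hlO.1] at h1
      rw [hγ₂t, sub_zero, abs_of_neg (by linarith [hlO.2] : lam s - tb < 0)] at h2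
      rcases min_cases (lam s) (tb - lam s) with ⟨he, _⟩ | ⟨he, _⟩ <;> rw [he]
      · exact h1
      · calc |γ₂ (lam s)| ≤ (Lγ:ℝ)*(-(lam s - tb)) := h2
          _ = (Lγ:ℝ)*(tb - lam s) := by ring
    have huabs : |φ₁ s| ≤ (Mφ:ℝ) := hφ₁bd s hsI
    have hvabs : |φ₂ (lam s)| ≤ (Mφ:ℝ) := hφ₂bd _ hlI
    have hsum0 : (0:ℝ) ≤ (Lγ:ℝ)*min s (tb-s) + (Lγ:ℝ)*min (lam s) (tb - lam s) := by
      have := mul_nonneg hLγ0 hm0.le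
      have := mul_nonneg hLγ0 hml0.le
      linarith
    have hnear : |lam s - s| ≤ zeta*(min s (tb-s) + min (lam s) (tb - lam s)) := by
      have he : lam s - s = (-2*((γ₂ (lam s) - γ₁ s))) * (φ₁ s + φ₂ (lam s)) := by
        linear_combination hQs s hsI
      have h1 : |γ₂ (lam s) - γ₁ s| ≤ (Lγ:ℝ)*min s (tb-s) + (Lγ:ℝ)*min (lam s) (tb - lam s) := by
        calc |γ₂ (lam s) - γ₁ s| ≤ |γ₂ (lam s)| + |γ₁ s| := abs_sub _ _
          _ ≤ _ := by linarith
      have h2 : |φ₁ s + φ₂ (lam s)| ≤ 2*(Mφ:ℝ) := by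
        calc |φ₁ s + φ₂ (lam s)| ≤ |φ₁ s| + |φ₂ (lam s)| := abs_add_le _ _
          _ ≤ 2*(Mφ:ℝ) := by linarith
      calc |lam s - s| = |(-2*((γ₂ (lam s) - γ₁ s)))| * |φ₁ s + φ₂ (lam s)| := by
            rw [he, abs_mul]
        _ = 2*|γ₂ (lam s) - γ₁ s| * |φ₁ s + φ₂ (lam s)| := by
            rw [abs_mul]; norm_num
        _ ≤ 2*(((Lγ:ℝ)*min s (tb-s) + (Lγ:ℝ)*min (lam s) (tb - lam s)) * (2*(Mφ:ℝ))) := by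
            have h3 := mul_le_mul h1 h2 (abs_nonneg _) hsum0
            linarith
        _ = 4*((Mφ:ℝ)*(Lγ:ℝ))*(min s (tb-s) + min (lam s) (tb - lam s)) := by ring
        _ ≤ zeta*(min s (tb-s) + min (lam s) (tb - lam s)) := by
            exact mul_le_mul_of_nonneg_right (by linarith) (by linarith)
    have hmlm : min (lam s) (tb - lam s) ≤ (11/9)*min s (tb - s) := by
      have hstep : min (lam s) (tb - lam s) ≤ min s (tb - s) + |lam s - s| := by
        rcases le_total s (tb - s) with h | h
        · rw [min_eq_left h]
          calc min (lam s) (tb - lam s) ≤ lam s := min_le_left _ _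
            _ ≤ s + |lam s - s| := by linarith [le_abs_self (lam s - s)]
        · rw [min_eq_right h]
          calc min (lam s) (tb - lam s) ≤ tb - lam s := min_le_right _ _
            _ ≤ (tb - s) + |lam s - s| := by linarith [neg_abs_le (lam s - s)]
      have hz' : zeta*(min s (tb-s) + min (lam s) (tb - lam s))
          ≤ (1/10)*(min s (tb-s) + min (lam s) (tb - lam s)) :=
        mul_le_mul_of_nonneg_right hz10 (by linarith)
      linarith
    refine ⟨ha, hb, ?_⟩
    have h1 : γ₂ (lam s) - γ₁ s ≤ (Lγ:ℝ)*min s (tb-s) + (Lγ:ℝ)*min (lam s) (tb - lam s) := by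
      have h2 := le_abs_self (γ₂ (lam s))
      have h3 := neg_abs_le (γ₁ s)
      linarith
    have h4 : (Lγ:ℝ)*min (lam s) (tb - lam s) ≤ (Lγ:ℝ)*((11/9)*min s (tb-s)) :=
      mul_le_mul_of_nonneg_left hmlm hLγ0
    linarith
  -- two-sided monotonicity bound for Tf
  have key : ∀ y : ℝ, ∀ s₁ ∈ Ioo (0:ℝ) tb, ∀ s₂ ∈ Ioo (0:ℝ) tb, s₁ < s₂ →
      (s₂-s₁)/9 ≤ Tf γ₁ γ₂ φ₁ φ₂ lam y s₂ - Tf γ₁ γ₂ φ₁ φ₂ lam y s₁ ∧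
      Tf γ₁ γ₂ φ₁ φ₂ lam y s₂ - Tf γ₁ γ₂ φ₁ φ₂ lam y s₁ ≤ 2*(s₂-s₁) := by
    intro y s₁ hs1 s₂ hs2 hlt
    have hs1I : s₁ ∈ Icc (0:ℝ) tb := ⟨hs1.1.le, hs1.2.le⟩
    have hs2I : s₂ ∈ Icc (0:ℝ) tb := ⟨hs2.1.le, hs2.2.le⟩
    have hl1I : lam s₁ ∈ Icc (0:ℝ) tb := hlamIcc _ hs1I
    have hl2I : lam s₂ ∈ Icc (0:ℝ) tb := hlamIcc _ hs2I
    obtain ⟨ha1, hb1, _⟩ := base s₁ hs1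
    obtain ⟨ha2, hb2, _⟩ := base s₂ hs2
    have hda : |γ₁ s₂ - γ₁ s₁| ≤ (Lγ:ℝ)*(s₂ - s₁) := by
      have h := lipabs _ _ hγ₁lip s₂ hs2I s₁ hs1I
      rwa [abs_of_pos (by linarith : (0:ℝ) < s₂ - s₁)] at h
    have hll : lam s₁ < lam s₂ := hlam_mono hs1I hs2I hlt
    have hdb : |γ₂ (lam s₂) - γ₂ (lam s₁)| ≤ (Lγ:ℝ)*(lam s₂ - lam s₁) := by
      have h := lipabs _ _ hγ₂lip _ hl2I _ hl1I
      rwa [abs_of_pos (by linarith : (0:ℝ) < lam s₂ - lam s₁)] at h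
    have hdu : |φ₁ s₂ - φ₁ s₁| ≤ (Lφ:ℝ)*(s₂ - s₁) := by
      have h := lipabs _ _ hφ₁lip s₂ hs2I s₁ hs1I
      rwa [abs_of_pos (by linarith : (0:ℝ) < s₂ - s₁)] at h
    have hdv : |φ₂ (lam s₂) - φ₂ (lam s₁)| ≤ (Lφ:ℝ)*(lam s₂ - lam s₁) := by
      have h := lipabs _ _ hφ₂lip _ hl2I _ hl1I
      rwa [abs_of_pos (by linarith : (0:ℝ) < lam s₂ - lam s₁)] at h
    have h := key_core (Mγ:ℝ) (Lγ:ℝ) (Mφ:ℝ) (Lφ:ℝ) zeta hMγ0 hLγ0 hMφ0 hLφ0 hz0 hz4 hz10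
      y s₁ s₂ (lam s₁) (lam s₂) (γ₁ s₁) (γ₁ s₂) (γ₂ (lam s₁)) (γ₂ (lam s₂))
      (φ₁ s₁) (φ₁ s₂) (φ₂ (lam s₁)) (φ₂ (lam s₂)) hlt hll
      (hγ₁bd _ hs1I) (hγ₁bd _ hs2I) (hγ₂bd _ hl1I) (hγ₂bd _ hl2I)
      (hφ₁bd _ hs1I) (hφ₁bd _ hs2I) (hφ₂bd _ hl1I) (hφ₂bd _ hl2I)
      hda hdb hdu hdv (hQs s₁ hs1I) (hQs s₂ hs2I) (by linarith) (by linarith)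
    exact h
  -- Tf is close to the identity
  have Tnear : ∀ y : ℝ, ∀ s ∈ Ioo (0:ℝ) tb,
      |Tf γ₁ γ₂ φ₁ φ₂ lam y s - s| ≤ (4/9)*min s (tb - s) := by
    intro y s hs
    have hsI : s ∈ Icc (0:ℝ) tb := ⟨hs.1.le, hs.2.le⟩
    have hlI := hlamIcc s hsI
    obtain ⟨ha, hb, hcb⟩ := base s hs
    have hc : 0 < γ₂ (lam s) - γ₁ s := by linarith
    obtain ⟨hw0, hwc⟩ := Wc_mem (p := y - γ₁ s) hc.le
    have hm0 : 0 < min s (tb - s) := lt_min hs.1 (by linarith [hs.2])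
    have hu : |φ₁ s| ≤ (Mφ:ℝ) := hφ₁bd _ hsI
    have hv : |φ₂ (lam s)| ≤ (Mφ:ℝ) := hφ₂bd _ hlI
    set w := Wc (y - γ₁ s) (γ₂ (lam s) - γ₁ s) with hwdef
    set g := w^2/(γ₂ (lam s) - γ₁ s) with hgdef
    have hgw : g ≤ w := by
      rw [hgdef, div_le_iff₀ hc]
      nlinarith [hw0, hwc]
    have hg0 : 0 ≤ g := by rw [hgdef]; positivity
    have he : Tf γ₁ γ₂ φ₁ φ₂ lam y s - s
        = -(4*(φ₁ s*w) + 2*(g*(φ₂ (lam s) - φ₁ s))) := by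
      rw [hgdef]
      simp only [Tf, ← hwdef]
      ring
    have hvu : |φ₂ (lam s) - φ₁ s| ≤ 2*(Mφ:ℝ) := by
      calc |φ₂ (lam s) - φ₁ s| ≤ |φ₂ (lam s)| + |φ₁ s| := abs_sub _ _
        _ ≤ 2*(Mφ:ℝ) := by linarith
    have t1 : |4*(φ₁ s*w)| ≤ 4*((Mφ:ℝ)*(γ₂ (lam s) - γ₁ s)) := by
      rw [abs_mul, abs_mul, abs_of_nonneg hw0]
      have h1 : |φ₁ s| * w ≤ (Mφ:ℝ)*(γ₂ (lam s) - γ₁ s) :=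
        mul_le_mul hu hwc hw0 hMφ0
      have h2 : |(4:ℝ)| = 4 := by norm_num
      rw [h2]
      linarith
    have t2 : |2*(g*(φ₂ (lam s) - φ₁ s))| ≤ 2*((γ₂ (lam s) - γ₁ s)*(2*(Mφ:ℝ))) := by
      rw [abs_mul, abs_mul, abs_of_nonneg hg0]
      have h1 : g * |φ₂ (lam s) - φ₁ s| ≤ (γ₂ (lam s) - γ₁ s)*(2*(Mφ:ℝ)) :=
        mul_le_mul (by linarith) hvu (abs_nonneg _) hc.le
      have h2 : |(2:ℝ)| = 2 := by norm_num
      rw [h2]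
      linarith
    have hsum : |Tf γ₁ γ₂ φ₁ φ₂ lam y s - s| ≤ 8*((Mφ:ℝ)*(γ₂ (lam s) - γ₁ s)) := by
      rw [he, abs_neg]
      calc |4*(φ₁ s*w) + 2*(g*(φ₂ (lam s) - φ₁ s))|
          ≤ |4*(φ₁ s*w)| + |2*(g*(φ₂ (lam s) - φ₁ s))| := abs_add_le _ _
        _ ≤ 8*((Mφ:ℝ)*(γ₂ (lam s) - γ₁ s)) := by linarith
    have e1 : (Mφ:ℝ)*(γ₂ (lam s) - γ₁ s) ≤ (Mφ:ℝ)*((20/9)*((Lγ:ℝ)*min s (tb-s))) :=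
      mul_le_mul_of_nonneg_left hcb hMφ0
    have e2 : (Mφ:ℝ)*(Lγ:ℝ)*(min s (tb-s)) ≤ (zeta/4)*(min s (tb-s)) :=
      mul_le_mul_of_nonneg_right hMφLγ hm0.le
    have e3 : zeta*(min s (tb-s)) ≤ (1/10)*(min s (tb-s)) :=
      mul_le_mul_of_nonneg_right hz10 hm0.le
    linarith
  -- the second component equals Tf at the first component
  have hFT : ∀ h s : ℝ, 0 < h → h < 1 → s ∈ Ioo (0:ℝ) tb →
      (1-h)*(s + 2*γ₁ s*φ₁ s) + h*(lam s + 2*γ₂ (lam s)*φ₂ (lam s))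
        - 2*((1-h)*φ₁ s + h*φ₂ (lam s))*((1-h)*γ₁ s + h*γ₂ (lam s))
      = Tf γ₁ γ₂ φ₁ φ₂ lam ((1-h)*γ₁ s + h*γ₂ (lam s)) s := by
    intro h s hh0 hh1 hs
    have hsI : s ∈ Icc (0:ℝ) tb := ⟨hs.1.le, hs.2.le⟩
    obtain ⟨ha, hb, _⟩ := base s hs
    have hc : 0 < γ₂ (lam s) - γ₁ s := by linarith
    have hyc : ((1-h)*γ₁ s + h*γ₂ (lam s)) - γ₁ s = h*(γ₂ (lam s) - γ₁ s) := by ring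
    have hwc : Wc (((1-h)*γ₁ s + h*γ₂ (lam s)) - γ₁ s) (γ₂ (lam s) - γ₁ s)
        = h*(γ₂ (lam s) - γ₁ s) := by
      rw [hyc]
      unfold Wc
      rw [min_eq_left (by nlinarith : h*(γ₂ (lam s) - γ₁ s) ≤ γ₂ (lam s) - γ₁ s),
        max_eq_right (by positivity : (0:ℝ) ≤ h*(γ₂ (lam s) - γ₁ s))]
    have hform : Tf γ₁ γ₂ φ₁ φ₂ lam ((1-h)*γ₁ s + h*γ₂ (lam s)) s
        = s - 4*φ₁ s*(h*(γ₂ (lam s) - γ₁ s))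
          - 2*h^2*(γ₂ (lam s) - γ₁ s)*(φ₂ (lam s) - φ₁ s) := by
      simp only [Tf, hwc]
      field_simp
    rw [hform]
    linear_combination h * (hQs s hsI)
  -- explicit components of the parametrization
  have hcomp : ∀ h s : ℝ,
      heisRho γ₁ γ₂ φ₁ φ₂ lam (h, s)
        = ((1-h)*φ₁ s + h*φ₂ (lam s),
           (1-h)*γ₁ s + h*γ₂ (lam s),
           (1-h)*(s + 2*γ₁ s*φ₁ s) + h*(lam s + 2*γ₂ (lam s)*φ₂ (lam s))) := by
    intro h s
    simp [heisRho, heisP, Prod.ext_iff, smul_eq_mul]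
  refine ⟨?_, ?_, ?_⟩
  · -- MapsTo
    rintro ⟨h, s⟩ hw
    simp only [mem_prod, mem_Ioo] at hw
    obtain ⟨⟨hh0, hh1⟩, hs0, hstb⟩ := hw
    have hs : s ∈ Ioo (0:ℝ) tb := ⟨hs0, hstb⟩
    have hsI : s ∈ Icc (0:ℝ) tb := ⟨hs0.le, hstb.le⟩
    have hlI := hlamIcc s hsI
    obtain ⟨ha, hb, hcb⟩ := base s hs
    have hc : 0 < γ₂ (lam s) - γ₁ s := by linarith
    have hQ' := hQs s hsI
    have hm0 : 0 < min s (tb - s) := lt_min hs0 (by linarith)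
    have hmp : min s (tb-s) ≤ s := min_le_left _ _
    have hmq : min s (tb-s) ≤ tb - s := min_le_right _ _
    have hu : |φ₁ s| ≤ (Mφ:ℝ) := hφ₁bd _ hsI
    have hv : |φ₂ (lam s)| ≤ (Mφ:ℝ) := hφ₂bd _ hlI
    simp only [hcomp, lensD, mem_setOf_eq, mem_Ioo]
    set y := (1-h)*γ₁ s + h*γ₂ (lam s) with hydef
    set t := (1-h)*(s + 2*γ₁ s*φ₁ s) + h*(lam s + 2*γ₂ (lam s)*φ₂ (lam s))
      - 2*((1-h)*φ₁ s + h*φ₂ (lam s))*((1-h)*γ₁ s + h*γ₂ (lam s)) with htdef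
    have hts : t - s = (-2*(h*(γ₂ (lam s) - γ₁ s))) * ((2-h)*φ₁ s + h*φ₂ (lam s)) := by
      rw [htdef]
      linear_combination h * hQ'
    have hW1 : |(2-h)*φ₁ s + h*φ₂ (lam s)| ≤ 2*(Mφ:ℝ) := by
      calc |(2-h)*φ₁ s + h*φ₂ (lam s)| ≤ |(2-h)*φ₁ s| + |h*φ₂ (lam s)| := abs_add_le _ _
        _ = (2-h)*|φ₁ s| + h*|φ₂ (lam s)| := by
            rw [abs_mul, abs_mul, abs_of_pos (by linarith : (0:ℝ) < 2-h), abs_of_pos hh0]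
        _ ≤ 2*(Mφ:ℝ) := by
            have e1 := mul_le_mul_of_nonneg_left hu (by linarith : (0:ℝ) ≤ 2-h)
            have e2 := mul_le_mul_of_nonneg_left hv hh0.le
            linarith
    have hhc0 : 0 < h*(γ₂ (lam s) - γ₁ s) := mul_pos hh0 hc
    have habs_ts : |t - s| ≤ 4*(Mφ:ℝ)*(h*(γ₂ (lam s) - γ₁ s)) := by
      rw [hts, abs_mul]
      have h1 : |(-2*(h*(γ₂ (lam s) - γ₁ s)))| = 2*(h*(γ₂ (lam s) - γ₁ s)) := by
        rw [abs_of_neg (by linarith)]; ring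
      rw [h1]
      calc 2*(h*(γ₂ (lam s) - γ₁ s)) * |(2-h)*φ₁ s + h*φ₂ (lam s)|
          ≤ 2*(h*(γ₂ (lam s) - γ₁ s)) * (2*(Mφ:ℝ)) :=
            mul_le_mul_of_nonneg_left hW1 (by linarith)
        _ = 4*(Mφ:ℝ)*(h*(γ₂ (lam s) - γ₁ s)) := by ring
    have habs_ts2 : |t - s| ≤ (2/9)*min s (tb - s) := by
      have e1 : 4*(Mφ:ℝ)*(h*(γ₂ (lam s) - γ₁ s)) ≤ 4*(Mφ:ℝ)*(γ₂ (lam s) - γ₁ s) := by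
        have : h*(γ₂ (lam s) - γ₁ s) ≤ γ₂ (lam s) - γ₁ s := by nlinarith
        nlinarith
      have e2 : 4*(Mφ:ℝ)*(γ₂ (lam s) - γ₁ s) ≤ 4*(Mφ:ℝ)*((20/9)*((Lγ:ℝ)*min s (tb-s))) := by
        have := mul_le_mul_of_nonneg_left hcb (by positivity : (0:ℝ) ≤ 4*(Mφ:ℝ))
        linarith
      have e3 : (Mφ:ℝ)*(Lγ:ℝ)*(min s (tb-s)) ≤ (zeta/4)*(min s (tb-s)) :=
        mul_le_mul_of_nonneg_right hMφLγ hm0.le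
      have e4 : zeta*(min s (tb-s)) ≤ (1/10)*(min s (tb-s)) :=
        mul_le_mul_of_nonneg_right hz10 hm0.le
      linarith [habs_ts]
    have habs_ts3 := abs_le.mp habs_ts2
    have ht0 : 0 < t := by linarith [habs_ts3.1]
    have httb : t < tb := by linarith [habs_ts3.2]
    have htI : t ∈ Icc (0:ℝ) tb := ⟨ht0.le, httb.le⟩
    have hyma : y - γ₁ s = h*(γ₂ (lam s) - γ₁ s) := by rw [hydef]; ring
    have hg1t : |γ₁ t - γ₁ s| ≤ (Lγ:ℝ)*|t - s| := lipabs _ _ hγ₁lip t htI s hsI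
    have hchain1 : (Lγ:ℝ)*|t-s| ≤ (1/10)*(h*(γ₂ (lam s) - γ₁ s)) := by
      have e1 : (Lγ:ℝ)*|t-s| ≤ (Lγ:ℝ)*(4*(Mφ:ℝ)*(h*(γ₂ (lam s) - γ₁ s))) :=
        mul_le_mul_of_nonneg_left habs_ts hLγ0
      have e2 : (Mφ:ℝ)*(Lγ:ℝ)*(h*(γ₂ (lam s) - γ₁ s)) ≤ (zeta/4)*(h*(γ₂ (lam s) - γ₁ s)) :=
        mul_le_mul_of_nonneg_right hMφLγ hhc0.le
      have e3 : zeta*(h*(γ₂ (lam s) - γ₁ s)) ≤ (1/10)*(h*(γ₂ (lam s) - γ₁ s)) :=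
        mul_le_mul_of_nonneg_right hz10 hhc0.le
      have e4 : (Lγ:ℝ)*(4*(Mφ:ℝ)*(h*(γ₂ (lam s) - γ₁ s)))
          = 4*((Mφ:ℝ)*(Lγ:ℝ)*(h*(γ₂ (lam s) - γ₁ s))) := by ring
      linarith
    have hy1 : γ₁ t < y := by
      have e5 := le_abs_self (γ₁ t - γ₁ s)
      linarith
    have htl : t - lam s
        = (2*((γ₂ (lam s) - γ₁ s)*(1-h))) * ((1-h)*φ₁ s + (1+h)*φ₂ (lam s)) := by
      rw [htdef]
      linear_combination (h - 1) * hQ'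
    have hW2 : |(1-h)*φ₁ s + (1+h)*φ₂ (lam s)| ≤ 2*(Mφ:ℝ) := by
      calc |(1-h)*φ₁ s + (1+h)*φ₂ (lam s)| ≤ |(1-h)*φ₁ s| + |(1+h)*φ₂ (lam s)| := abs_add_le _ _
        _ = (1-h)*|φ₁ s| + (1+h)*|φ₂ (lam s)| := by
            rw [abs_mul, abs_mul, abs_of_pos (by linarith : (0:ℝ) < 1-h),
              abs_of_pos (by linarith : (0:ℝ) < 1+h)]
        _ ≤ 2*(Mφ:ℝ) := by
            have e1 := mul_le_mul_of_nonneg_left hu (by linarith : (0:ℝ) ≤ 1-h)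
            have e2 := mul_le_mul_of_nonneg_left hv (by linarith : (0:ℝ) ≤ 1+h)
            linarith
    have hlc0 : 0 < (γ₂ (lam s) - γ₁ s)*(1-h) := mul_pos hc (by linarith)
    have habs_tl : |t - lam s| ≤ 4*(Mφ:ℝ)*((γ₂ (lam s) - γ₁ s)*(1-h)) := by
      rw [htl, abs_mul]
      have h1 : |(2*((γ₂ (lam s) - γ₁ s)*(1-h)))| = 2*((γ₂ (lam s) - γ₁ s)*(1-h)) := by
        rw [abs_of_pos (by linarith)]
      rw [h1]
      calc 2*((γ₂ (lam s) - γ₁ s)*(1-h)) * |(1-h)*φ₁ s + (1+h)*φ₂ (lam s)|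
          ≤ 2*((γ₂ (lam s) - γ₁ s)*(1-h)) * (2*(Mφ:ℝ)) :=
            mul_le_mul_of_nonneg_left hW2 (by linarith)
        _ = 4*(Mφ:ℝ)*((γ₂ (lam s) - γ₁ s)*(1-h)) := by ring
    have hg2t : |γ₂ t - γ₂ (lam s)| ≤ (Lγ:ℝ)*|t - lam s| := lipabs _ _ hγ₂lip t htI _ hlI
    have hchain2 : (Lγ:ℝ)*|t - lam s| ≤ (1/10)*((γ₂ (lam s) - γ₁ s)*(1-h)) := by
      have e1 : (Lγ:ℝ)*|t - lam s| ≤ (Lγ:ℝ)*(4*(Mφ:ℝ)*((γ₂ (lam s) - γ₁ s)*(1-h))) :=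
        mul_le_mul_of_nonneg_left habs_tl hLγ0
      have e2 : (Mφ:ℝ)*(Lγ:ℝ)*((γ₂ (lam s) - γ₁ s)*(1-h))
          ≤ (zeta/4)*((γ₂ (lam s) - γ₁ s)*(1-h)) :=
        mul_le_mul_of_nonneg_right hMφLγ hlc0.le
      have e3 : zeta*((γ₂ (lam s) - γ₁ s)*(1-h)) ≤ (1/10)*((γ₂ (lam s) - γ₁ s)*(1-h)) :=
        mul_le_mul_of_nonneg_right hz10 hlc0.le
      have e4 : (Lγ:ℝ)*(4*(Mφ:ℝ)*((γ₂ (lam s) - γ₁ s)*(1-h)))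
          = 4*((Mφ:ℝ)*(Lγ:ℝ)*((γ₂ (lam s) - γ₁ s)*(1-h))) := by ring
      linarith
    have hy2 : y < γ₂ t := by
      have hyb : γ₂ (lam s) - y = (γ₂ (lam s) - γ₁ s)*(1-h) := by rw [hydef]; ring
      have e5 := neg_abs_le (γ₂ t - γ₂ (lam s))
      linarith
    exact ⟨⟨ht0, httb⟩, hy1, hy2⟩
  · -- InjOn
    rintro ⟨h₁, s₁⟩ hw1 ⟨h₂, s₂⟩ hw2 heq
    simp only [mem_prod, mem_Ioo] at hw1 hw2
    obtain ⟨⟨h10, h11⟩, hs10, hs1t⟩ := hw1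
    obtain ⟨⟨h20, h21⟩, hs20, hs2t⟩ := hw2
    have hs1o : s₁ ∈ Ioo (0:ℝ) tb := ⟨hs10, hs1t⟩
    have hs2o : s₂ ∈ Ioo (0:ℝ) tb := ⟨hs20, hs2t⟩
    simp only [hcomp, Prod.mk.injEq] at heq
    obtain ⟨ey, et⟩ := heq
    have e1 := hFT h₁ s₁ h10 h11 hs1o
    have e2 := hFT h₂ s₂ h20 h21 hs2o
    rw [e1, e2] at et
    rw [ey] at et
    rcases lt_trichotomy s₁ s₂ with hlt | heqs | hlt
    · exfalso
      have hk := (key ((1-h₂)*γ₁ s₂ + h₂*γ₂ (lam s₂)) s₁ hs1o s₂ hs2o hlt).1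
      linarith
    · subst heqs
      obtain ⟨ha, hb, _⟩ := base s₁ hs1o
      have hc : 0 < γ₂ (lam s₁) - γ₁ s₁ := by linarith
      have hh12 : h₁ = h₂ := by
        have h3 : (h₁ - h₂)*(γ₂ (lam s₁) - γ₁ s₁) = 0 := by linear_combination ey
        rcases mul_eq_zero.mp h3 with h4 | h4
        · linarith
        · exact absurd h4 (by linarith)
      rw [hh12]
    · exfalso
      have hk := (key ((1-h₂)*γ₁ s₂ + h₂*γ₂ (lam s₂)) s₂ hs2o s₁ hs1o hlt).1
      linarith
  · -- SurjOn
    rintro ⟨y, t⟩ hyt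
    simp only [lensD, mem_setOf_eq, mem_Ioo] at hyt
    obtain ⟨⟨ht0, httb⟩, hy1, hy2⟩ := hyt
    have htI : t ∈ Icc (0:ℝ) tb := ⟨ht0.le, httb.le⟩
    set p := t/2 with hpdef
    set q := (t+tb)/2 with hqdef
    have hpIoo : p ∈ Ioo (0:ℝ) tb := ⟨by rw [hpdef]; linarith, by rw [hpdef]; linarith⟩
    have hqIoo : q ∈ Ioo (0:ℝ) tb := ⟨by rw [hqdef]; linarith, by rw [hqdef]; linarith⟩
    have hpq : p ≤ q := by rw [hpdef, hqdef]; linarith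
    have hsub : Icc p q ⊆ Ioo (0:ℝ) tb := fun x hx =>
      ⟨lt_of_lt_of_le hpIoo.1 hx.1, lt_of_le_of_lt hx.2 hqIoo.2⟩
    have hlip : LipschitzOnWith 2 (Tf γ₁ γ₂ φ₁ φ₂ lam y) (Icc p q) := by
      apply LipschitzOnWith.of_dist_le_mul
      intro x hx z hz
      have hcoe : ((2:NNReal):ℝ) = 2 := by norm_num
      rw [hcoe, Real.dist_eq, Real.dist_eq]
      rcases lt_trichotomy x z with hlt | heqs | hlt
      · have hk := key y x (hsub hx) z (hsub hz) hlt
        rw [abs_of_neg (by linarith [hk.1] : Tf γ₁ γ₂ φ₁ φ₂ lam y x - Tf γ₁ γ₂ φ₁ φ₂ lam y z < 0),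
          abs_of_neg (by linarith : x - z < 0)]
        linarith [hk.2]
      · rw [heqs]; simp
      · have hk := key y z (hsub hz) x (hsub hx) hlt
        rw [abs_of_pos (by linarith [hk.1] : 0 < Tf γ₁ γ₂ φ₁ φ₂ lam y x - Tf γ₁ γ₂ φ₁ φ₂ lam y z),
          abs_of_pos (by linarith : 0 < x - z)]
        linarith [hk.2]
    have hcont := hlip.continuousOn
    have hTp : Tf γ₁ γ₂ φ₁ φ₂ lam y p < t := by
      have h1 := (abs_le.mp (Tnear y p hpIoo)).2
      have h2 : min p (tb - p) ≤ p := min_le_left _ _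
      have h3 : 0 ≤ min p (tb - p) := le_min hpIoo.1.le (by linarith [hpIoo.2])
      rw [hpdef] at h2 ⊢
      linarith
    have hTq : t < Tf γ₁ γ₂ φ₁ φ₂ lam y q := by
      have h1 := (abs_le.mp (Tnear y q hqIoo)).1
      have h2 : min q (tb - q) ≤ tb - q := min_le_right _ _
      have h3 : 0 ≤ min q (tb - q) := le_min hqIoo.1.le (by linarith [hqIoo.2])
      rw [hqdef] at h2 ⊢
      linarith
    have hmem : t ∈ Icc (Tf γ₁ γ₂ φ₁ φ₂ lam y p) (Tf γ₁ γ₂ φ₁ φ₂ lam y q) :=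
      ⟨hTp.le, hTq.le⟩
    obtain ⟨s, hsmem, hTs⟩ := intermediate_value_Icc hpq hcont hmem
    have hsIoo : s ∈ Ioo (0:ℝ) tb := hsub hsmem
    have hsI : s ∈ Icc (0:ℝ) tb := ⟨hsIoo.1.le, hsIoo.2.le⟩
    have hlI := hlamIcc s hsI
    obtain ⟨ha, hb, _⟩ := base s hsIoo
    have hc : 0 < γ₂ (lam s) - γ₁ s := by linarith
    have hQ' := hQs s hsI
    have hya : γ₁ s < y := by
      by_contra hcon
      push_neg at hcon
      have hw0 : Wc (y - γ₁ s) (γ₂ (lam s) - γ₁ s) = 0 := by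
        unfold Wc
        rw [max_eq_left]
        exact le_trans (min_le_left _ _) (by linarith)
      have hT : Tf γ₁ γ₂ φ₁ φ₂ lam y s = s := by
        simp [Tf, hw0]
      rw [hT] at hTs
      rw [← hTs] at hy1
      linarith
    have hyb : y < γ₂ (lam s) := by
      by_contra hcon
      push_neg at hcon
      have hwc : Wc (y - γ₁ s) (γ₂ (lam s) - γ₁ s) = γ₂ (lam s) - γ₁ s := by
        unfold Wc
        rw [min_eq_right (by linarith), max_eq_right hc.le]
      have hT : Tf γ₁ γ₂ φ₁ φ₂ lam y s = lam s := by
        simp only [Tf, hwc]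
        have hsq : 2*(γ₂ (lam s) - γ₁ s)^2*(φ₂ (lam s) - φ₁ s)/(γ₂ (lam s) - γ₁ s)
            = 2*((γ₂ (lam s) - γ₁ s)*(φ₂ (lam s) - φ₁ s)) := by
          field_simp
        rw [hsq]
        linear_combination (-1 : ℝ) * hQ'
      rw [hT] at hTs
      rw [← hTs] at hy2
      linarith
    set h := (y - γ₁ s)/(γ₂ (lam s) - γ₁ s) with hhdef
    have hh0 : 0 < h := div_pos (by linarith) hc
    have hh1 : h < 1 := (div_lt_one hc).2 (by linarith)
    have hhc : h*(γ₂ (lam s) - γ₁ s) = y - γ₁ s := by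
      rw [hhdef]; field_simp
    have ey : (1-h)*γ₁ s + h*γ₂ (lam s) = y := by linear_combination hhc
    refine ⟨(h, s), ?_, ?_⟩
    · exact mem_prod.2 ⟨mem_Ioo.2 ⟨hh0, hh1⟩, hsIoo⟩
    · have et := hFT h s hh0 hh1 hsIoo
      have goal2 : (1-h)*(s + 2*γ₁ s*φ₁ s) + h*(lam s + 2*γ₂ (lam s)*φ₂ (lam s))
          - 2*((1-h)*φ₁ s + h*φ₂ (lam s))*((1-h)*γ₁ s + h*γ₂ (lam s)) = t := by
        rw [et, ey]
        exact hTs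
      simp only [hcomp, Prod.mk.injEq]
      exact ⟨ey, goal2⟩
end
end

section
/- Let t̄ > 0, let g : [0,t̄] → [0,∞) be concave with g(0) = g(t̄) = 0, and let λ : [0,t̄] → [0,t̄] be an increasing bijection with λ(0) = 0, λ(t̄) = t̄ whose inverse is Lipschitz with constant L ≥ 1 (i.e. |λ⁻¹(a) − λ⁻¹(b)| ≤ L|a−b| for all a,b). Then g(s) ≤ L·g(λ(s)) for every s ∈ [0,t̄]. -/
open Set

/-- if `g ≥ 0` is concave on `[0,t̄]` with `g(0) = g(t̄) = 0` and `λ` is an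
increasing bijection of `[0,t̄]` fixing the endpoints whose inverse is `L`-Lipschitz
(`L ≥ 1`), then `g(s) ≤ L·g(λ(s))`. -/
theorem stmt_8 (tb : ℝ) (htb : 0 < tb) (g : ℝ → ℝ)
    (hg_conc : ConcaveOn ℝ (Set.Icc 0 tb) g)
    (hg_nonneg : ∀ s ∈ Set.Icc 0 tb, 0 ≤ g s)
    (hg0 : g 0 = 0) (hgt : g tb = 0)
    (lam : ℝ → ℝ) (L : ℝ) (hL : 1 ≤ L)
    (hlam_bij : Set.BijOn lam (Set.Icc 0 tb) (Set.Icc 0 tb))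
    (hlam_mono : StrictMonoOn lam (Set.Icc 0 tb))
    (hlam0 : lam 0 = 0) (hlamt : lam tb = tb)
    (hinv : ∀ a ∈ Set.Icc 0 tb, ∀ b ∈ Set.Icc 0 tb, |a - b| ≤ L * |lam a - lam b|) :
    ∀ s ∈ Set.Icc 0 tb, g s ≤ L * g (lam s) := by
  intro s hs
  obtain ⟨hs0, hstb⟩ := hs
  have hu : lam s ∈ Set.Icc 0 tb := hlam_bij.1 ⟨hs0, hstb⟩
  obtain ⟨hu0, hutb⟩ := hu
  have hgu : 0 ≤ g (lam s) := hg_nonneg _ ⟨hu0, hutb⟩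
  have hgs : 0 ≤ g s := hg_nonneg _ ⟨hs0, hstb⟩
  have hLpos : (0:ℝ) < L := lt_of_lt_of_le one_pos hL
  have h1 : s ≤ L * lam s := by
    have := hinv s ⟨hs0, hstb⟩ 0 ⟨le_refl 0, htb.le⟩
    rw [hlam0, sub_zero, sub_zero, abs_of_nonneg hs0, abs_of_nonneg hu0] at this
    exact this
  have h2 : tb - s ≤ L * (tb - lam s) := by
    have := hinv tb ⟨htb.le, le_refl tb⟩ s ⟨hs0, hstb⟩
    rw [hlamt, abs_of_nonneg (by linarith), abs_of_nonneg (by linarith)] at this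
    exact this
  rcases le_or_gt s (lam s) with hcase | hcase
  · rcases eq_or_lt_of_le hutb with heq | hlt
    · have hstb' : s = tb := by rw [heq] at h2; nlinarith
      rw [hstb', hlamt, hgt]
      norm_num
    · -- s ≤ lam s < tb
      have hslt : s < tb := lt_of_le_of_lt hcase hlt
      have hden : 0 < tb - s := by linarith
      have hden' : 0 < tb - lam s := by linarith
      have ha : (0:ℝ) ≤ (tb - lam s)/(tb - s) := by positivity
      have hb : (0:ℝ) ≤ (lam s - s)/(tb - s) := by
        apply div_nonneg <;> linarith
      have hab : (tb - lam s)/(tb - s) + (lam s - s)/(tb - s) = 1 := by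
        field_simp
        ring
      have hcon := hg_conc.2 ⟨hs0, hstb⟩ ⟨htb.le, le_refl tb⟩ ha hb hab
      simp only [smul_eq_mul] at hcon
      have hpt : (tb - lam s)/(tb - s) * s + (lam s - s)/(tb - s) * tb = lam s := by
        field_simp
        ring
      rw [hpt, hgt, mul_zero, add_zero] at hcon
      -- hcon : (tb - lam s)/(tb - s) * g s ≤ g (lam s)
      have key : (tb - lam s) * g s ≤ (tb - s) * g (lam s) := by
        have h := mul_le_mul_of_nonneg_left hcon hden.le
        calc (tb - lam s) * g s = (tb - s) * ((tb - lam s) / (tb - s) * g s) := by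
              field_simp
          _ ≤ (tb - s) * g (lam s) := h
      nlinarith
  · -- lam s < s
    have hu_pos : 0 < lam s := by nlinarith
    have hspos : 0 < s := lt_of_le_of_lt hu0 hcase
    have ha : (0:ℝ) ≤ (s - lam s)/s := by
      apply div_nonneg <;> linarith
    have hb : (0:ℝ) ≤ lam s / s := by positivity
    have hab : (s - lam s)/s + lam s / s = 1 := by field_simp; ring
    have hcon := hg_conc.2 ⟨le_refl 0, htb.le⟩ ⟨hs0, hstb⟩ ha hb hab
    simp only [smul_eq_mul] at hcon
    have hpt : (s - lam s)/s * (0:ℝ) + (lam s / s) * s = lam s := by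
      field_simp
      ring
    rw [hpt, hg0, mul_zero, zero_add] at hcon
    -- hcon : lam s / s * g s ≤ g (lam s)
    have key : lam s * g s ≤ s * g (lam s) := by
      have h := mul_le_mul_of_nonneg_left hcon hspos.le
      calc lam s * g s = s * (lam s / s * g s) := by field_simp
        _ ≤ s * g (lam s) := h
    nlinarith
end

section
/- Let t̄ > 0 and 0 < ζ₀ < 1. Let γ₁, γ₂ : [0,t̄] → ℝ be Lipschitz with γ₁ < 0 < γ₂ on (0,t̄), γ₁(0) = γ₁(t̄) = γ₂(0) = γ₂(t̄) = 0, γ₁ convex and γ₂ concave. Then there exists a constant C > 0, depending only on γ₁, γ₂, t̄ and ζ₀, such that for every increasing bijection λ : [0,t̄] → [0,t̄] with λ(0) = 0, λ(t̄) = t̄ and with both λ and λ⁻¹ Lipschitz with constant at most (1+ζ₀)/(1−ζ₀), one has γ₂(λ(s)) − γ₁(s) ≥ C·min{ s + λ(s), 2t̄ − (s + λ(s)) } for all s ∈ [0,t̄]. -/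
open Set

/-- Lower bound for a concave function vanishing at the endpoints. -/
lemma concave_lb (tb : ℝ) (htb : 0 < tb) (f : ℝ → ℝ)
    (hconc : ConcaveOn ℝ (Set.Icc 0 tb) f) (h0 : f 0 = 0) (ht : f tb = 0) :
    ∀ t ∈ Set.Icc 0 tb, 2 * f (tb / 2) / tb * min t (tb - t) ≤ f t := by
  intro t htmem
  obtain ⟨ht0, httb⟩ := htmem
  have hhalf : tb / 2 ∈ Set.Icc 0 tb := ⟨by linarith, by linarith⟩
  have h0mem : (0 : ℝ) ∈ Set.Icc 0 tb := ⟨le_refl 0, htb.le⟩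
  have htbmem : tb ∈ Set.Icc 0 tb := ⟨htb.le, le_refl tb⟩
  have htbne : tb ≠ 0 := ne_of_gt htb
  rcases le_or_gt t (tb / 2) with h | h
  · have hmin : min t (tb - t) = t := min_eq_left (by linarith)
    have ha : (0:ℝ) ≤ 1 - 2 * t / tb := by
      have : 2 * t / tb ≤ 1 := by
        rw [div_le_one htb]; linarith
      linarith
    have hb : (0:ℝ) ≤ 2 * t / tb := by positivity
    have hab : (1 - 2 * t / tb) + 2 * t / tb = 1 := by ring
    have hc := hconc.2 h0mem hhalf ha hb hab
    have harg : (1 - 2 * t / tb) • (0:ℝ) + (2 * t / tb) • (tb / 2) = t := by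
      simp only [smul_eq_mul]
      field_simp
      ring
    rw [harg] at hc
    simp only [smul_eq_mul, h0, mul_zero, zero_add] at hc
    rw [hmin]
    calc 2 * f (tb / 2) / tb * t = 2 * t / tb * f (tb / 2) := by ring
    _ ≤ f t := hc
  · have hmin : min t (tb - t) = tb - t := min_eq_right (by linarith)
    have ha : (0:ℝ) ≤ 2 * (tb - t) / tb := by
      have : 0 ≤ tb - t := by linarith
      positivity
    have hb : (0:ℝ) ≤ (2 * t - tb) / tb := by
      have : 0 ≤ 2 * t - tb := by linarith
      positivity
    have hab : 2 * (tb - t) / tb + (2 * t - tb) / tb = 1 := by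
      field_simp
      ring
    have hc := hconc.2 hhalf htbmem ha hb hab
    have harg : (2 * (tb - t) / tb) • (tb / 2) + ((2 * t - tb) / tb) • tb = t := by
      simp only [smul_eq_mul]
      field_simp
      ring
    rw [harg] at hc
    simp only [smul_eq_mul, ht, mul_zero, add_zero] at hc
    rw [hmin]
    calc 2 * f (tb / 2) / tb * (tb - t) = 2 * (tb - t) / tb * f (tb / 2) := by ring
    _ ≤ f t := hc

/-- width lower bound for a lenticular domain: there is `C > 0`
depending only on `γ₁, γ₂, t̄, ζ₀` such that for every bi-Lipschitz increasing
reparametrization `λ` with constant `(1+ζ₀)/(1-ζ₀)` one has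
`γ₂(λ(s)) - γ₁(s) ≥ C·min(s + λ(s), 2t̄ - (s + λ(s)))`. -/
theorem stmt_10 (tb : ℝ) (htb : 0 < tb) (ζ₀ : ℝ) (hζ₀ : 0 < ζ₀) (hζ₀' : ζ₀ < 1)
    (γ₁ γ₂ : ℝ → ℝ) (Lγ : NNReal)
    (hγ₁lip : LipschitzOnWith Lγ γ₁ (Set.Icc 0 tb))
    (hγ₂lip : LipschitzOnWith Lγ γ₂ (Set.Icc 0 tb))
    (hsign : ∀ t ∈ Set.Ioo 0 tb, γ₁ t < 0 ∧ 0 < γ₂ t)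
    (hγ₁0 : γ₁ 0 = 0) (hγ₁t : γ₁ tb = 0) (hγ₂0 : γ₂ 0 = 0) (hγ₂t : γ₂ tb = 0)
    (hconv : ConvexOn ℝ (Set.Icc 0 tb) γ₁)
    (hconc : ConcaveOn ℝ (Set.Icc 0 tb) γ₂) :
    ∃ C > (0:ℝ), ∀ lam : ℝ → ℝ,
      Set.BijOn lam (Set.Icc 0 tb) (Set.Icc 0 tb) →
      StrictMonoOn lam (Set.Icc 0 tb) →
      lam 0 = 0 → lam tb = tb →
      LipschitzOnWith (Real.toNNReal ((1 + ζ₀) / (1 - ζ₀))) lam (Set.Icc 0 tb) →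
      (∀ a ∈ Set.Icc 0 tb, ∀ b ∈ Set.Icc 0 tb,
        |a - b| ≤ (1 + ζ₀) / (1 - ζ₀) * |lam a - lam b|) →
      ∀ s ∈ Set.Icc 0 tb,
        C * min (s + lam s) (2 * tb - (s + lam s)) ≤ γ₂ (lam s) - γ₁ s := by
  set K : ℝ := (1 + ζ₀) / (1 - ζ₀) with hKdef
  have hKpos : 0 < K := by
    apply div_pos <;> linarith
  have hK1 : 1 ≤ K := by
    rw [hKdef, le_div_iff₀ (by linarith)]
    linarith
  have hmid : 0 < γ₂ (tb / 2) := (hsign (tb / 2) ⟨by linarith, by linarith⟩).2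
  set c : ℝ := 2 * γ₂ (tb / 2) / tb with hcdef
  have hcpos : 0 < c := by positivity
  refine ⟨c / (K * (1 + K)), by positivity, ?_⟩
  intro lam hbij hmono hlam0 hlamtb hlip hinv s hs
  obtain ⟨hs0, hstb⟩ := hs
  have hlmem : lam s ∈ Set.Icc 0 tb := hbij.mapsTo ⟨hs0, hstb⟩
  obtain ⟨hl0, hltb⟩ := hlmem
  -- γ₁ s ≤ 0
  have hγ1 : γ₁ s ≤ 0 := by
    rcases eq_or_lt_of_le hs0 with h | h
    · rw [← h, hγ₁0]
    · rcases eq_or_lt_of_le hstb with h' | h'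
      · rw [h', hγ₁t]
      · exact (hsign s ⟨h, h'⟩).1.le
  -- concave lower bound for γ₂
  have hγ2 : c * min (lam s) (tb - lam s) ≤ γ₂ (lam s) :=
    concave_lb tb htb γ₂ hconc hγ₂0 hγ₂t (lam s) ⟨hl0, hltb⟩
  -- inverse Lipschitz bounds
  have hsK : s ≤ K * lam s := by
    have := hinv s ⟨hs0, hstb⟩ 0 ⟨le_refl 0, htb.le⟩
    rw [hlam0, sub_zero, sub_zero, abs_of_nonneg hs0, abs_of_nonneg hl0] at this
    exact this
  have htbsK : tb - s ≤ K * (tb - lam s) := by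
    have := hinv s ⟨hs0, hstb⟩ tb ⟨htb.le, le_refl tb⟩
    rw [hlamtb, abs_sub_comm s tb, abs_of_nonneg (by linarith : (0:ℝ) ≤ tb - s),
      abs_sub_comm (lam s) tb, abs_of_nonneg (by linarith : (0:ℝ) ≤ tb - lam s)] at this
    exact this
  -- forward Lipschitz bounds
  have hKcoe : ((Real.toNNReal K : NNReal) : ℝ) = K := Real.coe_toNNReal K hKpos.le
  have hlamK : lam s ≤ K * s := by
    have h := hlip.dist_le_mul s ⟨hs0, hstb⟩ 0 ⟨le_refl 0, htb.le⟩
    rw [Real.dist_eq, Real.dist_eq, hlam0, sub_zero, sub_zero, hKcoe,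
      abs_of_nonneg hl0, abs_of_nonneg hs0] at h
    exact h
  have htblamK : tb - lam s ≤ K * (tb - s) := by
    have h := hlip.dist_le_mul s ⟨hs0, hstb⟩ tb ⟨htb.le, le_refl tb⟩
    rw [Real.dist_eq, Real.dist_eq, hlamtb, hKcoe,
      abs_sub_comm (lam s) tb, abs_of_nonneg (by linarith : (0:ℝ) ≤ tb - lam s),
      abs_sub_comm s tb, abs_of_nonneg (by linarith : (0:ℝ) ≤ tb - s)] at h
    exact h
  -- key comparisons of minima
  have hmin1 : min (s + lam s) (2 * tb - (s + lam s)) ≤ (1 + K) * min s (tb - s) := by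
    rcases le_total s (tb - s) with h | h
    · rw [min_eq_left h]
      calc min (s + lam s) (2 * tb - (s + lam s)) ≤ s + lam s := min_le_left _ _
      _ ≤ (1 + K) * s := by linarith
    · rw [min_eq_right h]
      calc min (s + lam s) (2 * tb - (s + lam s)) ≤ 2 * tb - (s + lam s) :=
        min_le_right _ _
      _ ≤ (1 + K) * (tb - s) := by linarith
  have hmin2 : min s (tb - s) ≤ K * min (lam s) (tb - lam s) := by
    rcases le_total (lam s) (tb - lam s) with h | h
    · rw [min_eq_left h]
      calc min s (tb - s) ≤ s := min_le_left _ _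
      _ ≤ K * lam s := hsK
    · rw [min_eq_right h]
      calc min s (tb - s) ≤ tb - s := min_le_right _ _
      _ ≤ K * (tb - lam s) := htbsK
  -- combine
  have hchain : min (s + lam s) (2 * tb - (s + lam s)) ≤
      K * (1 + K) * min (lam s) (tb - lam s) := by
    calc min (s + lam s) (2 * tb - (s + lam s)) ≤ (1 + K) * min s (tb - s) := hmin1
    _ ≤ (1 + K) * (K * min (lam s) (tb - lam s)) :=
        mul_le_mul_of_nonneg_left hmin2 (by linarith)
    _ = K * (1 + K) * min (lam s) (tb - lam s) := by ring
  have hCpos : (0:ℝ) < c / (K * (1 + K)) := by positivity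
  calc c / (K * (1 + K)) * min (s + lam s) (2 * tb - (s + lam s))
      ≤ c / (K * (1 + K)) * (K * (1 + K) * min (lam s) (tb - lam s)) :=
        mul_le_mul_of_nonneg_left hchain hCpos.le
    _ = c * min (lam s) (tb - lam s) := by
        field_simp
    _ ≤ γ₂ (lam s) := hγ2
    _ ≤ γ₂ (lam s) - γ₁ s := by linarith
end
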